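/- arXiv:1404.7632 — 9 statements merged into one kernel-verified Lean document; each statement's English description precedes it below -/
import Mathlib

section
/- Assume τ_{i(T)} < T. Then m is a local maximum point of Q_T on (0, T) if and only if m < K·α. -/
open MeasureTheory Filter Set
open Topology

lemma rpow_tangent_le' {p x y : ℝ} (hp : 0 < p) (hp1 : p < 1)
    (hx : 0 < x) (hy : 0 ≤ y) : y ^ p ≤ x ^ p + p * x ^ (p - 1) * (y - x) := by
  have hs : -1 ≤ (y - x) / x := by
    rw [le_div_iff₀ hx]; linarith
  have h1 : (1 + (y - x) / x) ^ p ≤ 1 + p * ((y - x) / x) :=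
    rpow_one_add_le_one_add_mul_self hs hp.le hp1.le
  have h2 : 1 + (y - x) / x = y / x := by field_simp; ring
  rw [h2] at h1
  have h3 : (y / x) ^ p = y ^ p / x ^ p := Real.div_rpow hy hx.le p
  rw [h3] at h1
  have hxp : (0:ℝ) < x ^ p := Real.rpow_pos_of_pos hx _
  have h4 : y ^ p ≤ (1 + p * ((y - x) / x)) * x ^ p := by
    rw [← div_le_iff₀ hxp]; exact h1
  have h5 : x ^ (p - 1) = x ^ p / x := by
    rw [Real.rpow_sub hx, Real.rpow_one]
  calc y ^ p ≤ (1 + p * ((y - x) / x)) * x ^ p := h4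
    _ = x ^ p + p * (x ^ p / x) * (y - x) := by field_simp
    _ = x ^ p + p * x ^ (p - 1) * (y - x) := by rw [h5]

lemma rpow_tangent_lt' {p x y : ℝ} (hp : 0 < p) (hp1 : p < 1)
    (hx : 0 < x) (hy : 0 ≤ y) (hxy : y ≠ x) :
    y ^ p < x ^ p + p * x ^ (p - 1) * (y - x) := by
  have hs : -1 ≤ (y - x) / x := by
    rw [le_div_iff₀ hx]; linarith
  have hs' : (y - x) / x ≠ 0 := by
    intro h; apply hxy; have := (div_eq_zero_iff.mp h).resolve_right hx.ne'
    linarith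
  have h1 : (1 + (y - x) / x) ^ p < 1 + p * ((y - x) / x) :=
    rpow_one_add_lt_one_add_mul_self hs hs' hp hp1
  have h2 : 1 + (y - x) / x = y / x := by field_simp; ring
  rw [h2] at h1
  have h3 : (y / x) ^ p = y ^ p / x ^ p := Real.div_rpow hy hx.le p
  rw [h3] at h1
  have hxp : (0:ℝ) < x ^ p := Real.rpow_pos_of_pos hx _
  have h4 : y ^ p < (1 + p * ((y - x) / x)) * x ^ p := by
    rw [← div_lt_iff₀ hxp]; exact h1
  have h5 : x ^ (p - 1) = x ^ p / x := by
    rw [Real.rpow_sub hx, Real.rpow_one]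
  calc y ^ p < (1 + p * ((y - x) / x)) * x ^ p := h4
    _ = x ^ p + p * (x ^ p / x) * (y - x) := by field_simp
    _ = x ^ p + p * x ^ (p - 1) * (y - x) := by rw [h5]

/-- Assume `τ_{i(T)} < T`. Then `m = T − τ_{i(T)}` is a local maximum
point of `Q_T(t) = (I(T) − I(T−t))/t` on `(0, T)` if and only if `m < K·α`, where
`α = τ_{i(T)} − τ_{i(T)−1}` and `K = (1/(2D))^{1/(1−2D)}`. -/
theorem localMax_iff_m_lt_K_alpha
    (D σ : ℝ) (hD : D ∈ Set.Ioo (0 : ℝ) (1/2)) (hσ : 0 < σ)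
    (τ : ℤ → ℝ) (hτmono : StrictMono τ) (hτ0 : τ 0 < 0) (hτ1 : 0 < τ 1)
    (hτtop : Tendsto τ atTop atTop) (hτbot : Tendsto τ atBot atBot)
    (i : ℝ → ℕ)
    (hi : ∀ t : ℝ, 0 ≤ t → τ (i t) ≤ t ∧ t < τ ((i t : ℤ) + 1))
    (I : ℝ → ℝ)
    (hI : ∀ t : ℝ, 0 ≤ t →
      I t = σ^2 * ((t - τ (i t)) ^ (2*D)
        + (∑ k ∈ Finset.range (i t), (τ ((k : ℤ) + 1) - τ (k : ℤ)) ^ (2*D))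
        - (-τ 0) ^ (2*D)))
    (T : ℝ) (hT : 0 < T) (hiT : 1 ≤ i T) (hlast : τ (i T) < T)
    (m α K : ℝ)
    (hm : m = T - τ (i T)) (hα : α = τ (i T) - τ ((i T : ℤ) - 1))
    (hK : K = (1 / (2*D)) ^ (1 / (1 - 2*D))) :
    IsLocalMaxOn (fun t : ℝ => (I T - I (T - t)) / t) (Set.Ioo 0 T) m ↔ m < K * α := by
  obtain ⟨hD0, hD2⟩ := hD
  set p := 2 * D with hp_def
  have hp : 0 < p := by simp only [hp_def]; linarith
  have hp1 : p < 1 := by simp only [hp_def]; linarith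
  have hq : (0:ℝ) < 1 - p := by linarith
  have hτn_pos : 0 < τ (i T) := lt_of_lt_of_le hτ1 (hτmono.monotone (by exact_mod_cast hiT))
  have hm_pos : 0 < m := by rw [hm]; linarith
  have hmT : m < T := by rw [hm]; linarith
  have hα_pos : 0 < α := by
    rw [hα]; have := hτmono (show (i T:ℤ) - 1 < (i T : ℤ) by omega); linarith
  have hT2 : T < τ ((i T : ℤ) + 1) := (hi T hT.le).2
  -- uniqueness of i
  have huniq : ∀ t : ℝ, 0 ≤ t → ∀ k : ℕ, τ (k:ℤ) ≤ t → t < τ ((k:ℤ)+1) → i t = k := by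
    intro t ht k h1 h2
    obtain ⟨l1, l2⟩ := hi t ht
    have a1 : (i t : ℤ) < (k:ℤ) + 1 := hτmono.lt_iff_lt.mp (l1.trans_lt h2)
    have a2 : (k:ℤ) < (i t : ℤ) + 1 := hτmono.lt_iff_lt.mp (h1.trans_lt l2)
    omega
  -- the two explicit formulas for I
  set S := ∑ k ∈ Finset.range (i T), (τ ((k:ℤ)+1) - τ (k:ℤ)) ^ p with hS_def
  have hI_up : ∀ t : ℝ, τ (i T) ≤ t → t < τ ((i T : ℤ)+1) →
      I t = σ^2 * ((t - τ (i T)) ^ p + S - (-τ 0) ^ p) := by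
    intro t h1 h2
    have ht0 : (0:ℝ) ≤ t := le_trans hτn_pos.le h1
    have hit : i t = i T := huniq t ht0 (i T) h1 h2
    rw [hI t ht0, hit]
  have hc1 : ((i T - 1 : ℕ) : ℤ) = (i T : ℤ) - 1 := by omega
  have hsplit : S
      = (∑ k ∈ Finset.range (i T - 1), (τ ((k:ℤ)+1) - τ (k:ℤ)) ^ p) + α ^ p := by
    rw [hS_def]
    have hn : i T - 1 + 1 = i T := Nat.succ_pred_eq_of_pos hiT
    have h := Finset.sum_range_succ (fun k : ℕ => (τ ((k:ℤ)+1) - τ (k:ℤ)) ^ p) (i T - 1)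
    rw [hn] at h
    rw [h, hc1]
    have : τ ((i T:ℤ) - 1 + 1) = τ (i T) := by norm_num
    rw [this, hα]
  have hI_down : ∀ s : ℝ, 0 < s → s < α → s < τ (i T) →
      I (τ (i T) - s) = σ^2 * ((α - s) ^ p + (S - α ^ p) - (-τ 0) ^ p) := by
    intro s hs0 hsα hsτ
    have ht0 : (0:ℝ) ≤ τ (i T) - s := by linarith
    have hτiT1 : τ ((i T : ℤ) - 1) = τ (i T) - α := by rw [hα]; ring
    have hb1 : τ (((i T - 1 : ℕ) : ℤ)) ≤ τ (i T) - s := by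
      rw [hc1, hτiT1]; linarith
    have hb2 : τ (i T) - s < τ (((i T - 1 : ℕ) : ℤ) + 1) := by
      rw [hc1]
      have : (i T:ℤ) - 1 + 1 = (i T : ℤ) := by ring
      rw [this]; linarith
    have hit : i (τ (i T) - s) = i T - 1 := huniq _ ht0 (i T - 1) hb1 hb2
    have harg : τ (i T) - s - (τ (i T) - α) = α - s := by ring
    rw [hI _ ht0, hit, hc1, hτiT1, hsplit, harg, add_sub_cancel_right]
  -- values of Q
  have hIT : I T = σ^2 * (m ^ p + S - (-τ 0) ^ p) := by
    rw [hI_up T (hi T hT.le).1 hT2, hm]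
  have hf_left : ∀ t : ℝ, 0 < t → t ≤ m →
      (I T - I (T - t)) / t = σ^2 * (m ^ p - (m - t) ^ p) / t := by
    intro t h0 h1
    have hITt : I (T - t) = σ^2 * ((m - t) ^ p + S - (-τ 0) ^ p) := by
      have e1 : τ (i T) ≤ T - t := by rw [hm] at h1; linarith
      have e2 : T - t < τ ((i T : ℤ)+1) := by linarith
      rw [hI_up _ e1 e2, hm]
      ring_nf
    rw [hIT, hITt]; ring_nf
  have hf_right : ∀ s : ℝ, 0 < s → s < α → s < τ (i T) →
      (I T - I (T - (m + s))) / (m + s) = σ^2 * (m ^ p + α ^ p - (α - s) ^ p) / (m + s) := by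
    intro s hs0 hsα hsτ
    have e : T - (m + s) = τ (i T) - s := by rw [hm]; ring
    rw [e, hI_down s hs0 hsα hsτ, hIT]
    ring_nf
  have hfm : (I T - I (T - m)) / m = σ^2 * m ^ p / m := by
    have := hf_left m hm_pos le_rfl
    rw [show m - m = 0 by ring, Real.zero_rpow hp.ne'] at this
    rw [this]; ring_nf
  -- characterization of K-condition
  have hKpos : 0 < K := by
    rw [hK]; exact Real.rpow_pos_of_pos (by positivity) _
  have hmq : 0 < m ^ (1 - p) := Real.rpow_pos_of_pos hm_pos _
  have hαq : 0 < α ^ (1 - p) := Real.rpow_pos_of_pos hα_pos _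
  have e1 : K ^ (1 - p) = 1 / p := by
    rw [hK, ← Real.rpow_mul (by positivity), one_div_mul_cancel hq.ne', Real.rpow_one]
  have e2 : m ^ (p - 1) = (m ^ (1 - p))⁻¹ := by
    rw [show p - 1 = -(1 - p) by ring, Real.rpow_neg hm_pos.le]
  have e3 : α ^ (p - 1) = (α ^ (1 - p))⁻¹ := by
    rw [show p - 1 = -(1 - p) by ring, Real.rpow_neg hα_pos.le]
  have iff1 : p * α ^ (p - 1) < m ^ (p - 1) ↔ p * m ^ (1 - p) < α ^ (1 - p) := by
    rw [e2, e3, show p * (α ^ (1-p))⁻¹ = p / α ^ (1-p) by ring,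
      show (m ^ (1-p))⁻¹ = 1 / m ^ (1-p) from (one_div _).symm,
      div_lt_div_iff₀ hαq hmq, one_mul]
  have iff2 : m < K * α ↔ m ^ (1 - p) < (K * α) ^ (1 - p) :=
    (Real.rpow_lt_rpow_iff hm_pos.le (by positivity) hq).symm
  have iff3 : m ^ (1 - p) < (K * α) ^ (1 - p) ↔ p * m ^ (1 - p) < α ^ (1 - p) := by
    rw [Real.mul_rpow hKpos.le hα_pos.le, e1,
      show 1 / p * α ^ (1-p) = α ^ (1-p) / p by ring, lt_div_iff₀ hp, mul_comm]
  have hKiff : m < K * α ↔ p * α ^ (p - 1) < m ^ (p - 1) :=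
    iff2.trans (iff3.trans iff1.symm)
  have hmp1 : m * m ^ (p - 1) = m ^ p := by
    rw [Real.rpow_sub hm_pos, Real.rpow_one]
    field_simp
  rw [hKiff]
  constructor
  · -- local max implies the derivative condition  (contrapositive)
    intro hmax
    by_contra hkey'
    have hkey : m ^ (p - 1) ≤ p * α ^ (p - 1) := not_lt.mp hkey'
    have hsub : Ioo m T ⊆ Ioo 0 T := Ioo_subset_Ioo hm_pos.le le_rfl
    have hmem : m ∈ closure (Ioo m T) := by
      rw [closure_Ioo hmT.ne]; exact ⟨le_rfl, hmT.le⟩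
    have hne : (𝓝[Ioo m T] m).NeBot := mem_closure_iff_nhdsWithin_neBot.mp hmem
    have hev1 : ∀ᶠ x in 𝓝[Ioo m T] m,
        (I T - I (T - x)) / x ≤ (I T - I (T - m)) / m :=
      hmax.filter_mono (nhdsWithin_mono m hsub)
    have hev2 : ∀ᶠ x in 𝓝[Ioo m T] m, x < m + min α (τ (i T)) := by
      have hlt : m < m + min α (τ (i T)) := by
        have := lt_min hα_pos hτn_pos; linarith
      exact eventually_nhdsWithin_of_eventually_nhds (eventually_lt_nhds hlt)
    obtain ⟨x, hx1, hx2, hx3⟩ := (hev1.and (hev2.and eventually_mem_nhdsWithin)).exists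
    obtain ⟨hxm, hxT⟩ := hx3
    set s := x - m with hs_def
    have hs0 : 0 < s := by simp only [hs_def]; linarith
    have hsα : s < α := by
      have := min_le_left α (τ (i T)); simp only [hs_def]; linarith
    have hsτ : s < τ (i T) := by
      have := min_le_right α (τ (i T)); simp only [hs_def]; linarith
    have hxe : x = m + s := by simp only [hs_def]; ring
    have hfx : (I T - I (T - x)) / x = σ^2 * (m ^ p + α ^ p - (α - s) ^ p) / (m + s) := by
      rw [hxe]; exact hf_right s hs0 hsα hsτ
    -- strict tangent inequality at α
    have htan : (α - s) ^ p < α ^ p + p * α ^ (p - 1) * ((α - s) - α) :=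
      rpow_tangent_lt' hp hp1 hα_pos (by linarith)
        (by intro h; exact absurd (show s = 0 by linarith) hs0.ne')
    have ht2 : p * α ^ (p - 1) * s < α ^ p - (α - s) ^ p := by
      have he : (α - s) - α = -s := by ring
      rw [he, mul_neg] at htan; linarith
    have hc2 : m ^ (p - 1) * s ≤ p * α ^ (p - 1) * s :=
      mul_le_mul_of_nonneg_right hkey hs0.le
    have hc3 : m ^ p * s < m * (α ^ p - (α - s) ^ p) := by
      have h5 := mul_lt_mul_of_pos_left (lt_of_le_of_lt hc2 ht2) hm_pos
      rw [← mul_assoc, hmp1] at h5; exact h5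
    have hcontr : (I T - I (T - m)) / m < (I T - I (T - x)) / x := by
      rw [hfm, hfx, div_lt_div_iff₀ hm_pos (by linarith : (0:ℝ) < m + s)]
      have h6 := mul_lt_mul_of_pos_left hc3 (show (0:ℝ) < σ^2 by positivity)
      have h7 : σ^2*m^p*(m+s) = σ^2*(m^p*m) + σ^2*(m^p*s) := by ring
      have h8 : σ^2*(m^p+α^p-(α-s)^p)*m = σ^2*(m^p*m) + σ^2*(m*(α^p-(α-s)^p)) := by ring
      rw [h7, h8]; linarith
    exact absurd hx1 (not_le.mpr hcontr)
  · intro hkey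
    have hcont : ContinuousAt (fun s : ℝ => p * (α - s) ^ (p - 1)) 0 := by
      have h1 : ContinuousAt (fun s : ℝ => α - s) 0 :=
        (continuous_const.sub continuous_id).continuousAt
      have h2 : ContinuousAt (fun y : ℝ => y ^ (p - 1)) ((fun s : ℝ => α - s) 0) :=
        Real.continuousAt_rpow_const _ _ (Or.inl (by simpa using hα_pos.ne'))
      exact continuousAt_const.mul (h2.comp h1)
    have h0 : (fun s : ℝ => p * (α - s) ^ (p - 1)) 0 < m ^ (p - 1) := by simpa using hkey
    have hev : ∀ᶠ s in 𝓝 (0:ℝ), p * (α - s) ^ (p - 1) < m ^ (p - 1) :=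
      Filter.Tendsto.eventually_lt_const h0 hcont
    obtain ⟨δ, hδ0, hδ⟩ := Metric.eventually_nhds_iff.mp hev
    have hε0 : 0 < min δ (min α (τ (i T))) := lt_min hδ0 (lt_min hα_pos hτn_pos)
    show ∀ᶠ x in 𝓝[Ioo 0 T] m, (I T - I (T - x)) / x ≤ (I T - I (T - m)) / m
    rw [eventually_nhdsWithin_iff, Metric.eventually_nhds_iff]
    refine ⟨min δ (min α (τ (i T))), hε0, fun y hy hyIoo => ?_⟩
    obtain ⟨hy0, hyT⟩ := hyIoo
    rw [Real.dist_eq] at hy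
    rcases le_or_gt y m with hle | hgt
    · rcases eq_or_lt_of_le hle with rfl | hlt
      · exact le_rfl
      · rw [hf_left y hy0 hle, hfm, div_le_div_iff₀ hy0 hm_pos]
        have hb0 : 0 < (m - y) / m := div_pos (by linarith) hm_pos
        have hb1 : (m - y) / m ≤ 1 := by
          rw [div_le_one hm_pos]; linarith
        have hkey0 : ((m - y) / m) ^ (1:ℝ) ≤ ((m - y) / m) ^ p :=
          Real.rpow_le_rpow_of_exponent_ge hb0 hb1 hp1.le
        rw [Real.rpow_one, Real.div_rpow (by linarith) hm_pos.le] at hkey0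
        have hmppos : (0:ℝ) < m ^ p := Real.rpow_pos_of_pos hm_pos _
        have hk2 : (m - y) * m ^ p ≤ (m - y) ^ p * m := by
          rw [div_le_div_iff₀ hm_pos hmppos] at hkey0; linarith
        have h6 := mul_le_mul_of_nonneg_left hk2 (show (0:ℝ) ≤ σ^2 by positivity)
        have h7 : σ^2*(m^p - (m-y)^p)*m = σ^2*(m^p*m) - σ^2*((m-y)^p*m) := by ring
        have h8 : σ^2*m^p*y = σ^2*(m^p*m) - σ^2*((m-y)*m^p) := by ring
        rw [h7, h8]; linarith
    · set s := y - m with hs_def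
      have hs0 : 0 < s := by simp only [hs_def]; linarith
      have habs : |y - m| = s := abs_of_pos hs0
      have hsδ : s < δ := by
        have := min_le_left δ (min α (τ (i T))); rw [habs] at hy; linarith
      have hsα : s < α := by
        have h1 := min_le_right δ (min α (τ (i T)))
        have h2 := min_le_left α (τ (i T)); rw [habs] at hy; linarith
      have hsτ : s < τ (i T) := by
        have h1 := min_le_right δ (min α (τ (i T)))
        have h2 := min_le_right α (τ (i T)); rw [habs] at hy; linarith
      have hye : y = m + s := by simp only [hs_def]; ring
      rw [hye, hf_right s hs0 hsα hsτ, hfm]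
      have hδs : p * (α - s) ^ (p - 1) < m ^ (p - 1) := by
        apply hδ; rw [Real.dist_eq, sub_zero, abs_of_pos hs0]; exact hsδ
      have htan : α ^ p ≤ (α - s) ^ p + p * (α - s) ^ (p - 1) * (α - (α - s)) :=
        rpow_tangent_le' hp hp1 (by linarith) hα_pos.le
      have ht2 : α ^ p - (α - s) ^ p ≤ p * (α - s) ^ (p - 1) * s := by
        have he : α - (α - s) = s := by ring
        rw [he] at htan; linarith
      have ht3 : α ^ p - (α - s) ^ p ≤ m ^ (p - 1) * s :=
        le_trans ht2 (mul_le_mul_of_nonneg_right hδs.le hs0.le)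
      rw [div_le_div_iff₀ (by linarith : (0:ℝ) < m + s) hm_pos]
      have hc3 : m * (α ^ p - (α - s) ^ p) ≤ m ^ p * s := by
        have h5 := mul_le_mul_of_nonneg_left ht3 hm_pos.le
        rw [← mul_assoc, hmp1] at h5; linarith
      have h6 := mul_le_mul_of_nonneg_left hc3 (show (0:ℝ) ≤ σ^2 by positivity)
      have h7 : σ^2*(m^p + α^p - (α-s)^p)*m = σ^2*(m^p*m) + σ^2*(m*(α^p - (α-s)^p)) := by ring
      have h8 : σ^2*m^p*(m+s) = σ^2*(m^p*m) + σ^2*(m^p*s) := by ring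
      rw [h7, h8]; linarith
end

section
/- Assume τ_{i(T)} < T. For every t ∈ (0, m), Q_T is differentiable at t with Q_T′(t) = (2Dσ²(T − t − τ_{i(T)})^{2D−1}·t − (I(T) − I(T−t)))/t², and Q_T′(t) > 0. In particular Q_T is strictly increasing on (0, m). -/
open MeasureTheory Filter Set

/-- Bernoulli-type tangent-line inequality for strictly concave `x ^ p`, `0 < p < 1`. -/
theorem QT_aux_bernoulli (p b t : ℝ) (hp0 : 0 < p) (hp1 : p < 1) (hb : 0 < b) (ht : 0 < t) :
    (b + t) ^ p < b ^ p + p * b ^ (p - 1) * t := by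
  have hs : (0:ℝ) < t / b := by positivity
  have h := rpow_one_add_lt_one_add_mul_self (s := t / b) (by linarith) (ne_of_gt hs) hp0 hp1
  have hbp : (0:ℝ) < b ^ p := Real.rpow_pos_of_pos hb p
  have h2 : ((1 + t / b) ^ p) * b ^ p < (1 + p * (t / b)) * b ^ p :=
    mul_lt_mul_of_pos_right h hbp
  have e1 : ((1 + t / b) ^ p) * b ^ p = (b + t) ^ p := by
    rw [← Real.mul_rpow (by positivity) hb.le]
    congr 1
    field_simp
  have e2 : (1 + p * (t / b)) * b ^ p = b ^ p + p * b ^ (p - 1) * t := by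
    rw [Real.rpow_sub hb p 1, Real.rpow_one]
    field_simp
  rw [e1, e2] at h2
  exact h2

/-- Assume `τ_{i(T)} < T`. For every `t ∈ (0, m)`, `Q_T` is
differentiable at `t` with
`Q_T′(t) = (2Dσ²(T − t − τ_{i(T)})^{2D−1}·t − (I(T) − I(T−t)))/t²`, and `Q_T′(t) > 0`.
In particular `Q_T` is strictly increasing on `(0, m)`. -/
theorem QT_deriv_pos_before_m
    (D σ : ℝ) (hD : D ∈ Set.Ioo (0 : ℝ) (1/2)) (hσ : 0 < σ)
    (τ : ℤ → ℝ) (hτmono : StrictMono τ) (hτ0 : τ 0 < 0) (hτ1 : 0 < τ 1)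
    (hτtop : Tendsto τ atTop atTop) (hτbot : Tendsto τ atBot atBot)
    (i : ℝ → ℕ)
    (hi : ∀ t : ℝ, 0 ≤ t → τ (i t) ≤ t ∧ t < τ ((i t : ℤ) + 1))
    (I : ℝ → ℝ)
    (hI : ∀ t : ℝ, 0 ≤ t →
      I t = σ^2 * ((t - τ (i t)) ^ (2*D)
        + (∑ k ∈ Finset.range (i t), (τ ((k : ℤ) + 1) - τ (k : ℤ)) ^ (2*D))
        - (-τ 0) ^ (2*D)))
    (T : ℝ) (hT : 0 < T) (hiT : 1 ≤ i T) (hlast : τ (i T) < T)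
    (m : ℝ) (hm : m = T - τ (i T)) :
    (∀ t ∈ Set.Ioo (0 : ℝ) m,
        HasDerivAt (fun u : ℝ => (I T - I (T - u)) / u)
          ((2*D*σ^2 * (T - t - τ (i T)) ^ (2*D - 1) * t - (I T - I (T - t))) / t^2) t ∧
        0 < (2*D*σ^2 * (T - t - τ (i T)) ^ (2*D - 1) * t - (I T - I (T - t))) / t^2) ∧
    StrictMonoOn (fun u : ℝ => (I T - I (T - u)) / u) (Set.Ioo 0 m) := by
  set p : ℝ := 2 * D with hp
  have hp0 : 0 < p := by have := hD.1; positivity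
  have hp1 : p < 1 := by have := hD.2; simp only [hp]; linarith
  have hτpos : 0 < τ (i T) := lt_of_lt_of_le hτ1 (hτmono.monotone (by exact_mod_cast hiT))
  have hm0 : 0 < m := by rw [hm]; linarith
  -- i is constant on [τ (i T), T]
  have hiTc := hi T hT.le
  have hieq : ∀ u ∈ Set.Ioo (0:ℝ) m, i (T - u) = i T := by
    intro u ⟨hu0, hum⟩
    have hTu : (0:ℝ) ≤ T - u := by
      have : τ (i T) < T - u := by rw [hm] at hum; linarith
      linarith
    have h1 := hi (T - u) hTu
    have hle : τ (i T) ≤ T - u := by rw [hm] at hum; linarith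
    have hlt : T - u < τ ((i T : ℤ) + 1) := by linarith [hiTc.2, hu0]
    by_contra hne
    rcases lt_or_gt_of_ne hne with hlt' | hgt'
    · have : ((i (T - u) : ℤ) + 1) ≤ i T := by exact_mod_cast hlt'
      have := hτmono.monotone this
      linarith [h1.2]
    · have : ((i T : ℤ) + 1) ≤ i (T - u) := by exact_mod_cast hgt'
      have := hτmono.monotone this
      linarith [h1.1]
  -- the difference I T - I (T - u) on (0, m)
  have hdiff : ∀ u ∈ Set.Ioo (0:ℝ) m, I T - I (T - u) = σ^2 * (m ^ p - (m - u) ^ p) := by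
    intro u hu
    have hTu : (0:ℝ) ≤ T - u := by
      have := hu.2; rw [hm] at this; linarith
    rw [hI T hT.le, hI (T - u) hTu, hieq u hu]
    have e1 : T - u - τ (i T) = m - u := by rw [hm]; ring
    have e2 : T - τ (i T) = m := by rw [hm]
    rw [e1, e2]
    ring
  -- the local model function
  set g : ℝ → ℝ := fun u => σ^2 * (m ^ p - (m - u) ^ p) / u with hg
  have hmain : ∀ t ∈ Set.Ioo (0:ℝ) m,
      HasDerivAt (fun u : ℝ => (I T - I (T - u)) / u)
        ((2*D*σ^2 * (T - t - τ (i T)) ^ (2*D - 1) * t - (I T - I (T - t))) / t^2) t ∧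
      0 < (2*D*σ^2 * (T - t - τ (i T)) ^ (2*D - 1) * t - (I T - I (T - t))) / t^2 := by
    intro t ht
    obtain ⟨ht0, htm⟩ := ht
    have hmt : 0 < m - t := by linarith
    have e3 : T - t - τ (i T) = m - t := by rw [hm]; ring
    -- derivative of the numerator
    have hnum : HasDerivAt (fun u : ℝ => σ^2 * (m ^ p - (m - u) ^ p))
        (σ^2 * (p * (m - t) ^ (p - 1))) t := by
      have h1 : HasDerivAt (fun u : ℝ => m - u) (-1) t := by
        simpa using (hasDerivAt_id t).const_sub m
      have h2 : HasDerivAt (fun u : ℝ => (m - u) ^ p)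
          (p * (m - t) ^ (p - 1) * (-1)) t :=
        (Real.hasDerivAt_rpow_const (Or.inl (ne_of_gt hmt))).comp t h1
      have h3 := (h2.const_sub (m ^ p)).const_mul (σ^2)
      refine h3.congr_deriv ?_
      ring
    have hden : HasDerivAt (fun u : ℝ => u) 1 t := hasDerivAt_id t
    have hquot := hnum.div hden (ne_of_gt ht0)
    -- the derivative value matches
    have hval : (2*D*σ^2 * (T - t - τ (i T)) ^ (2*D - 1) * t - (I T - I (T - t))) / t^2
        = (σ^2 * (p * (m - t) ^ (p - 1)) * t
            - σ^2 * (m ^ p - (m - t) ^ p) * 1) / t ^ 2 := by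
      rw [hdiff t ⟨ht0, htm⟩, e3, hp]
      ring_nf
    constructor
    · rw [hval]
      refine hquot.congr_of_eventuallyEq ?_
      have hmem : Set.Ioo (0:ℝ) m ∈ nhds t := (isOpen_Ioo).mem_nhds ⟨ht0, htm⟩
      filter_upwards [hmem] with u hu
      rw [hdiff u hu]; rfl
    · -- positivity
      rw [hval]
      have hkey : m ^ p < (m - t) ^ p + p * (m - t) ^ (p - 1) * t := by
        have := QT_aux_bernoulli p (m - t) t hp0 hp1 hmt ht0
        have hb : m - t + t = m := by ring
        rwa [hb] at this
      have hσ2 : (0:ℝ) < σ^2 := by positivity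
      have hnumpos : 0 < σ^2 * (p * (m - t) ^ (p - 1)) * t
          - σ^2 * (m ^ p - (m - t) ^ p) * 1 := by nlinarith
      positivity
  refine ⟨hmain, ?_⟩
  refine strictMonoOn_of_deriv_pos (convex_Ioo 0 m) ?_ ?_
  · intro x hx
    exact ((hmain x hx).1.differentiableAt.continuousAt).continuousWithinAt
  · intro x hx
    rw [interior_Ioo] at hx
    rw [(hmain x hx).1.deriv]
    exact (hmain x hx).2
end

section
/- Assume τ_{i(T)} < T. For every t ∈ (m, T) with T − t > τ_{i(T)−1}, Q_T is differentiable at t with Q_T′(t) = (2Dσ²(T − t − τ_{i(T)−1})^{2D−1}·t − (I(T) − I(T−t)))/t². Moreover lim_{t→m⁺} Q_T′(t) = (σ²/m²)·(2Dα^{2D−1}·m − m^{2D}), and this limit is negative if and only if m < K·α, zero if and only if m = K·α, and positive if and only if m > K·α. -/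
open MeasureTheory Filter Set

/-- Assume `τ_{i(T)} < T`. For every `t ∈ (m, T)` with
`T − t > τ_{i(T)−1}`, `Q_T` is differentiable at `t` with
`Q_T′(t) = (2Dσ²(T − t − τ_{i(T)−1})^{2D−1}·t − (I(T) − I(T−t)))/t²`. Moreover
`lim_{t→m⁺} Q_T′(t) = (σ²/m²)·(2Dα^{2D−1}·m − m^{2D})`, and this limit is negative iff
`m < K·α`, zero iff `m = K·α`, and positive iff `m > K·α`. -/
theorem QT_deriv_after_m_and_right_limit
    (D σ : ℝ) (hD : D ∈ Set.Ioo (0 : ℝ) (1/2)) (hσ : 0 < σ)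
    (τ : ℤ → ℝ) (hτmono : StrictMono τ) (hτ0 : τ 0 < 0) (hτ1 : 0 < τ 1)
    (hτtop : Tendsto τ atTop atTop) (hτbot : Tendsto τ atBot atBot)
    (i : ℝ → ℕ)
    (hi : ∀ t : ℝ, 0 ≤ t → τ (i t) ≤ t ∧ t < τ ((i t : ℤ) + 1))
    (I : ℝ → ℝ)
    (hI : ∀ t : ℝ, 0 ≤ t →
      I t = σ^2 * ((t - τ (i t)) ^ (2*D)
        + (∑ k ∈ Finset.range (i t), (τ ((k : ℤ) + 1) - τ (k : ℤ)) ^ (2*D))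
        - (-τ 0) ^ (2*D)))
    (T : ℝ) (hT : 0 < T) (hiT : 1 ≤ i T) (hlast : τ (i T) < T)
    (m α K L : ℝ)
    (hm : m = T - τ (i T)) (hα : α = τ (i T) - τ ((i T : ℤ) - 1))
    (hK : K = (1 / (2*D)) ^ (1 / (1 - 2*D)))
    (hL : L = σ^2 / m^2 * (2*D*α ^ (2*D - 1) * m - m ^ (2*D))) :
    (∀ t ∈ Set.Ioo m T, τ ((i T : ℤ) - 1) < T - t →
        HasDerivAt (fun u : ℝ => (I T - I (T - u)) / u)
          ((2*D*σ^2 * (T - t - τ ((i T : ℤ) - 1)) ^ (2*D - 1) * t - (I T - I (T - t))) / t^2)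
          t) ∧
    Tendsto (fun t : ℝ => deriv (fun u : ℝ => (I T - I (T - u)) / u) t)
      (nhdsWithin m (Set.Ioi m)) (nhds L) ∧
    (L < 0 ↔ m < K * α) ∧ (L = 0 ↔ m = K * α) ∧ (0 < L ↔ K * α < m) := by
  obtain ⟨hD0, hD2⟩ := hD
  have h2D0 : 0 < 2*D := by linarith
  have h2D1 : 2*D - 1 < 0 := by linarith
  set n := i T with hn
  set c := τ ((n : ℤ) - 1) with hc
  have hα0 : 0 < α := by
    rw [hα]
    have := hτmono (show ((n:ℤ)-1) < (n:ℤ) by omega)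
    linarith
  have hm0 : 0 < m := by rw [hm]; linarith
  have hτn0 : 0 < τ (n:ℤ) :=
    lt_of_lt_of_le hτ1 (hτmono.monotone (by exact_mod_cast hiT))
  have hmT : m < T := by rw [hm]; linarith
  -- identification of i on the previous interval
  have hkey : ∀ s : ℝ, 0 ≤ s → c ≤ s → s < τ (n:ℤ) → i s = n - 1 := by
    intro s hs0 h1 h2
    obtain ⟨ha, hb⟩ := hi s hs0
    have e1 : (i s : ℤ) < (n : ℤ) := by
      by_contra h
      push_neg at h
      exact absurd (le_trans (hτmono.monotone h) ha) (not_le.mpr h2)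
    have e2 : (n : ℤ) - 1 < (i s : ℤ) + 1 :=
      hτmono.lt_iff_lt.mp (lt_of_le_of_lt h1 hb)
    omega
  have hcast : ((n - 1 : ℕ) : ℤ) = (n:ℤ) - 1 := by
    have := hiT; omega
  -- explicit formula for the difference
  have hIdiff : ∀ t : ℝ, m < t → t < T → c < T - t →
      I T - I (T - t) = σ^2 * (m ^ (2*D) + α ^ (2*D) - (T - t - c) ^ (2*D)) := by
    intro t ht1 ht2 hτt
    have hs0 : (0:ℝ) ≤ T - t := by linarith
    have hs2 : T - t < τ (n:ℤ) := by rw [hm] at ht1; linarith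
    have hin : i (T - t) = n - 1 := hkey _ hs0 hτt.le hs2
    rw [hI T hT.le, hI (T - t) hs0, hin, hcast]
    have hsum : ∑ k ∈ Finset.range n, (τ ((k:ℤ)+1) - τ (k:ℤ)) ^ (2*D)
        = (∑ k ∈ Finset.range (n-1), (τ ((k:ℤ)+1) - τ (k:ℤ)) ^ (2*D))
          + (τ (n:ℤ) - τ ((n:ℤ)-1)) ^ (2*D) := by
      have h := Finset.sum_range_succ
        (fun k => (τ ((k:ℤ)+1) - τ (k:ℤ)) ^ (2*D)) (n-1)
      rw [show n - 1 + 1 = n by omega] at h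
      rw [h, hcast]
      norm_num
    rw [hsum, hm, hα, hc]
    ring
  -- the main derivative claim
  have hmain : ∀ t ∈ Set.Ioo m T, c < T - t →
      HasDerivAt (fun u : ℝ => (I T - I (T - u)) / u)
        ((2*D*σ^2 * (T - t - c) ^ (2*D - 1) * t - (I T - I (T - t))) / t^2) t := by
    intro t ht htt
    have ht0 : 0 < t := lt_trans hm0 ht.1
    have hbase : 0 < T - t - c := by linarith
    have h1 : HasDerivAt (fun u : ℝ => T - u - c) (-1) t := by
      simpa using ((hasDerivAt_id t).const_sub T).sub_const c
    have h2 : HasDerivAt (fun u : ℝ => (T - u - c) ^ (2*D))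
        ((2*D) * (T - t - c) ^ (2*D - 1) * (-1)) t :=
      by have := (Real.hasDerivAt_rpow_const (x := T - t - c) (p := 2*D) (Or.inl hbase.ne')).comp t h1; exact this
    have hN : HasDerivAt (fun u : ℝ => σ^2 * (m ^ (2*D) + α ^ (2*D) - (T - u - c) ^ (2*D)))
        (σ^2 * (-((2*D) * (T - t - c) ^ (2*D - 1) * (-1)))) t := by
      have := (h2.const_sub (m ^ (2*D) + α ^ (2*D))).const_mul (σ^2)
      simpa using this
    have hg : HasDerivAt
        (fun u : ℝ => σ^2 * (m ^ (2*D) + α ^ (2*D) - (T - u - c) ^ (2*D)) / u)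
        ((σ^2 * (-((2*D) * (T - t - c) ^ (2*D - 1) * (-1))) * t
          - σ^2 * (m ^ (2*D) + α ^ (2*D) - (T - t - c) ^ (2*D)) * 1) / t^2) t :=
      hN.div (hasDerivAt_id t) ht0.ne'
    have heq : (fun u : ℝ => (I T - I (T - u)) / u)
        =ᶠ[nhds t] (fun u : ℝ => σ^2 * (m ^ (2*D) + α ^ (2*D) - (T - u - c) ^ (2*D)) / u) := by
      have hopen : IsOpen (Set.Ioo m (min T (T - c))) := isOpen_Ioo
      have htmem : t ∈ Set.Ioo m (min T (T - c)) := by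
        refine ⟨ht.1, lt_min ht.2 (by linarith)⟩
      filter_upwards [hopen.mem_nhds htmem] with u hu
      rw [hIdiff u hu.1 (lt_of_lt_of_le hu.2 (min_le_left _ _))
        (by have := lt_of_lt_of_le hu.2 (min_le_right _ _); linarith)]
    have := hg.congr_of_eventuallyEq heq
    refine HasDerivAt.congr_deriv this ?_
    rw [hIdiff t ht.1 ht.2 htt]
    ring
  refine ⟨hmain, ?_, ?_⟩
  · -- Tendsto
    have hev : ∀ᶠ t in nhdsWithin m (Set.Ioi m),
        deriv (fun u : ℝ => (I T - I (T - u)) / u) t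
          = (2*D*σ^2 * (T - t - c) ^ (2*D - 1) * t
              - σ^2 * (m ^ (2*D) + α ^ (2*D) - (T - t - c) ^ (2*D))) / t^2 := by
      have hmem : Set.Ioo m (min T (T - c)) ∈ nhdsWithin m (Set.Ioi m) :=
        Ioo_mem_nhdsGT_of_mem ⟨le_refl m, lt_min hmT (by rw [hm]; have : c < τ (n:ℤ) := hτmono (by omega); linarith)⟩
      filter_upwards [hmem] with t ht
      have ht1 := ht.1
      have ht2 : t < T := lt_of_lt_of_le ht.2 (min_le_left _ _)
      have ht3 : c < T - t := by
        have := lt_of_lt_of_le ht.2 (min_le_right _ _); linarith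
      rw [(hmain t ⟨ht1, ht2⟩ ht3).deriv, hIdiff t ht1 ht2 ht3]
    have hval : T - m - c = α := by rw [hm, hα, hc]; ring
    have hcont : ContinuousAt (fun t : ℝ =>
        (2*D*σ^2 * (T - t - c) ^ (2*D - 1) * t
          - σ^2 * (m ^ (2*D) + α ^ (2*D) - (T - t - c) ^ (2*D))) / t^2) m := by
      have hb : ContinuousAt (fun t : ℝ => T - t - c) m := by fun_prop
      have hb0 : T - m - c ≠ 0 := by rw [hval]; exact hα0.ne'
      have h1 : ContinuousAt (fun t : ℝ => (T - t - c) ^ (2*D - 1)) m :=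
        hb.rpow_const (Or.inl hb0)
      have h2 : ContinuousAt (fun t : ℝ => (T - t - c) ^ (2*D)) m :=
        hb.rpow_const (Or.inl hb0)
      exact ((((continuousAt_const.mul h1).mul continuousAt_id).sub
        (continuousAt_const.mul ((continuousAt_const.add continuousAt_const).sub h2))).div
        (continuousAt_id.pow 2) (by positivity))
    have hLeq : (2*D*σ^2 * (T - m - c) ^ (2*D - 1) * m
        - σ^2 * (m ^ (2*D) + α ^ (2*D) - (T - m - c) ^ (2*D))) / m^2 = L := by
      rw [hval, hL]
      field_simp
      ring
    refine Tendsto.congr' (by filter_upwards [hev] with t ht; exact ht.symm) ?_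
    rw [← hLeq]
    exact (hcont.tendsto).mono_left nhdsWithin_le_nhds
  · -- sign conditions
    have hK0 : 0 < K := by rw [hK]; positivity
    have hKpow : K ^ (2*D-1) = 2*D := by
      have hexp : (1/(1-2*D))*(2*D-1) = -1 := by
        have h12 : (1:ℝ) - 2*D ≠ 0 := by linarith
        field_simp
        ring
      rw [hK, ← Real.rpow_mul (by positivity), hexp, Real.rpow_neg_one]
      simp
    have hKα2 : (K*α) ^ (2*D-1) = 2*D * α ^ (2*D-1) := by
      rw [Real.mul_rpow hK0.le hα0.le, hKpow]
    have hm2D : m ^ (2*D) = m ^ (2*D-1) * m := by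
      rw [← Real.rpow_add_one hm0.ne' (2*D-1)]
      norm_num
    have hcore : 2*D*α ^ (2*D-1)*m - m ^ (2*D)
        = ((K*α) ^ (2*D-1) - m ^ (2*D-1)) * m := by
      rw [hKα2, hm2D]; ring
    set d : ℝ := (K*α) ^ (2*D-1) - m ^ (2*D-1) with hd
    have hLd : L = (σ^2/m^2*m) * d := by rw [hL, hcore]; ring
    have hq : 0 < σ^2/m^2*m := by positivity
    have hrpow : ∀ x y : ℝ, 0 < x → 0 < y → (x ^ (2*D-1) < y ^ (2*D-1) ↔ y < x) :=
      fun x y hx hy => Real.rpow_lt_rpow_iff_of_neg hx hy h2D1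
    have hKα0 : 0 < K*α := by positivity
    have hdlt : d < 0 ↔ m < K*α := by
      rw [hd, sub_neg]; exact hrpow _ _ hKα0 hm0
    have hdgt : 0 < d ↔ K*α < m := by
      rw [hd, sub_pos]; exact hrpow _ _ hm0 hKα0
    have h1 : L < 0 ↔ m < K*α := by
      rw [hLd, ← hdlt]
      constructor
      · intro h; nlinarith
      · intro h; exact mul_neg_of_pos_of_neg hq h
    have h3 : 0 < L ↔ K*α < m := by
      rw [hLd, ← hdgt]
      constructor
      · intro h; nlinarith
      · intro h; exact mul_pos hq h
    have h2 : L = 0 ↔ m = K*α := by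
      constructor
      · intro h
        rcases lt_trichotomy m (K*α) with hcmp | hcmp | hcmp
        · exact absurd (h1.mpr hcmp) (by rw [h]; exact lt_irrefl 0)
        · exact hcmp
        · exact absurd (h3.mpr hcmp) (by rw [h]; exact lt_irrefl 0)
      · intro h
        rcases lt_trichotomy L 0 with hcmp | hcmp | hcmp
        · exact absurd (h1.mp hcmp) (by rw [h]; exact lt_irrefl _)
        · exact hcmp
        · exact absurd (h3.mp hcmp) (by rw [h]; exact lt_irrefl _)
    exact ⟨h1, h2, h3⟩
end

section
/- Assume i(T) ≥ 2 and τ_{i(T)} < T. Then m + α ∈ (0, T) and Q_T(m) − Q_T(m+α) = σ²·(α·m^{2D} − m·α^{2D})/(m·(m+α)). Consequently, for each fixed α > 0 and σ > 0, the function m ↦ σ²·(α·m^{2D} − m·α^{2D})/(m·(m+α)) tends to +∞ as m → 0⁺. -/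
open MeasureTheory Filter Set

/-- Assume `i(T) ≥ 2` and `τ_{i(T)} < T`. Then `m + α ∈ (0, T)` and
`Q_T(m) − Q_T(m+α) = σ²·(α·m^{2D} − m·α^{2D})/(m·(m+α))`. Consequently, for fixed
`α > 0` and `σ > 0`, that expression tends to `+∞` as `m → 0⁺`. -/
theorem QT_gap_at_m_plus_alpha
    (D σ : ℝ) (hD : D ∈ Set.Ioo (0 : ℝ) (1/2)) (hσ : 0 < σ)
    (τ : ℤ → ℝ) (hτmono : StrictMono τ) (hτ0 : τ 0 < 0) (hτ1 : 0 < τ 1)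
    (hτtop : Tendsto τ atTop atTop) (hτbot : Tendsto τ atBot atBot)
    (i : ℝ → ℕ)
    (hi : ∀ t : ℝ, 0 ≤ t → τ (i t) ≤ t ∧ t < τ ((i t : ℤ) + 1))
    (I : ℝ → ℝ)
    (hI : ∀ t : ℝ, 0 ≤ t →
      I t = σ^2 * ((t - τ (i t)) ^ (2*D)
        + (∑ k ∈ Finset.range (i t), (τ ((k : ℤ) + 1) - τ (k : ℤ)) ^ (2*D))
        - (-τ 0) ^ (2*D)))
    (T : ℝ) (hT : 0 < T) (hiT : 2 ≤ i T) (hlast : τ (i T) < T)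
    (m α : ℝ)
    (hm : m = T - τ (i T)) (hα : α = τ (i T) - τ ((i T : ℤ) - 1)) :
    m + α ∈ Set.Ioo (0 : ℝ) T ∧
    (I T - I (T - m)) / m - (I T - I (T - (m + α))) / (m + α)
      = σ^2 * (α * m ^ (2*D) - m * α ^ (2*D)) / (m * (m + α)) ∧
    Tendsto (fun x : ℝ => σ^2 * (α * x ^ (2*D) - x * α ^ (2*D)) / (x * (x + α)))
      (nhdsWithin 0 (Set.Ioi 0)) atTop := by
  obtain ⟨hD0, hD2⟩ := hD
  have h2D : (0:ℝ) < 2*D := by linarith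
  have h2D1 : 2*D < 1 := by linarith
  set n := i T with hn
  have hm0 : 0 < m := by rw [hm]; linarith
  have hα0 : 0 < α := by
    rw [hα]; have := hτmono (show (n:ℤ) - 1 < (n:ℤ) by omega); linarith
  have hτn1pos : 0 < τ ((n:ℤ) - 1) := by
    have h1le : (1:ℤ) ≤ (n:ℤ) - 1 := by omega
    rcases eq_or_lt_of_le h1le with h | h
    · rw [← h]; exact hτ1
    · exact lt_trans hτ1 (hτmono h)
  have hτnpos : 0 < τ (n:ℤ) := by
    have := hτmono (show (n:ℤ) - 1 < (n:ℤ) by omega); linarith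
  have hmem : m + α ∈ Set.Ioo (0:ℝ) T := by
    refine ⟨by linarith, ?_⟩
    have : m + α = T - τ ((n:ℤ) - 1) := by rw [hm, hα]; ring
    rw [this]; linarith
  refine ⟨hmem, ?_, ?_⟩
  · -- the exact identity
    have hTm : T - m = τ (n:ℤ) := by rw [hm]; ring
    have hTma : T - (m + α) = τ ((n:ℤ) - 1) := by rw [hm, hα]; ring
    have hiτn : i (τ (n:ℤ)) = n := by
      obtain ⟨h1, h2⟩ := hi (τ (n:ℤ)) hτnpos.le
      have ha : (i (τ (n:ℤ)) : ℤ) ≤ (n:ℤ) := hτmono.le_iff_le.mp h1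
      have hb : (n:ℤ) < (i (τ (n:ℤ)) : ℤ) + 1 := hτmono.lt_iff_lt.mp h2
      omega
    have hiτn1 : i (τ ((n:ℤ) - 1)) = n - 1 := by
      obtain ⟨h1, h2⟩ := hi (τ ((n:ℤ) - 1)) hτn1pos.le
      have ha : (i (τ ((n:ℤ) - 1)) : ℤ) ≤ (n:ℤ) - 1 := hτmono.le_iff_le.mp h1
      have hb : (n:ℤ) - 1 < (i (τ ((n:ℤ) - 1)) : ℤ) + 1 := hτmono.lt_iff_lt.mp h2
      omega
    have hzero : (0:ℝ) ^ (2*D) = 0 := Real.zero_rpow (ne_of_gt h2D)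
    have hIT : I T = σ^2 * (m ^ (2*D)
        + (∑ k ∈ Finset.range n, (τ ((k : ℤ) + 1) - τ (k : ℤ)) ^ (2*D))
        - (-τ 0) ^ (2*D)) := by
      rw [hI T hT.le, ← hn, ← hm]
    have hITm : I (T - m) = σ^2 * ((0:ℝ)
        + (∑ k ∈ Finset.range n, (τ ((k : ℤ) + 1) - τ (k : ℤ)) ^ (2*D))
        - (-τ 0) ^ (2*D)) := by
      rw [hTm, hI (τ (n:ℤ)) hτnpos.le, hiτn, sub_self, hzero]
    have hc1 : ((n - 1 : ℕ) : ℤ) + 1 = (n : ℤ) := by push_cast [Nat.cast_sub (by omega : 1 ≤ n)]; ring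
    have hc2 : ((n - 1 : ℕ) : ℤ) = (n : ℤ) - 1 := by push_cast [Nat.cast_sub (by omega : 1 ≤ n)]; ring
    have hsum : (∑ k ∈ Finset.range n, (τ ((k : ℤ) + 1) - τ (k : ℤ)) ^ (2*D))
        = (∑ k ∈ Finset.range (n-1), (τ ((k : ℤ) + 1) - τ (k : ℤ)) ^ (2*D)) + α ^ (2*D) := by
      have hs := Finset.sum_range_succ (fun k : ℕ => (τ ((k : ℤ) + 1) - τ (k : ℤ)) ^ (2*D)) (n-1)
      have hn1 : (n - 1) + 1 = n := by omega
      rw [hn1] at hs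
      rw [hs, hc1, hc2, hα]
    have hITma : I (T - (m + α)) = σ^2 * ((0:ℝ)
        + (∑ k ∈ Finset.range (n-1), (τ ((k : ℤ) + 1) - τ (k : ℤ)) ^ (2*D))
        - (-τ 0) ^ (2*D)) := by
      rw [hTma, hI (τ ((n:ℤ) - 1)) hτn1pos.le, hiτn1, hc2, sub_self, hzero]
    have e1 : I T - I (T - m) = σ^2 * m ^ (2*D) := by rw [hIT, hITm]; ring
    have e2 : I T - I (T - (m + α)) = σ^2 * (m ^ (2*D) + α ^ (2*D)) := by
      rw [hIT, hITma, hsum]; ring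
    rw [e1, e2]
    have hma0 : m + α ≠ 0 := by positivity
    field_simp
    ring
  · -- the limit
    have hσ2 : 0 < σ^2 := by positivity
    have h1 : Tendsto (fun x : ℝ => x ^ (2*D - 1)) (nhdsWithin 0 (Set.Ioi 0)) atTop := by
      have := (tendsto_rpow_atTop (show (0:ℝ) < 1 - 2*D by linarith)).comp
        tendsto_inv_nhdsGT_zero
      refine this.congr' ?_
      filter_upwards [self_mem_nhdsWithin] with x hx
      have hx0 : 0 < x := hx
      show x⁻¹ ^ (1 - 2*D) = x ^ (2*D - 1)
      rw [Real.inv_rpow hx0.le, ← Real.rpow_neg hx0.le]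
      congr 1; ring
    have h2 : Tendsto (fun x : ℝ => σ^2 * (α * x ^ (2*D - 1) - α ^ (2*D)))
        (nhdsWithin 0 (Set.Ioi 0)) atTop := by
      have := (h1.const_mul_atTop hα0)
      have h3 := tendsto_atTop_add_const_right (nhdsWithin (0:ℝ) (Set.Ioi 0))
        (-(α ^ (2*D))) this
      have h4 := h3.const_mul_atTop hσ2
      refine h4.congr (fun x => by ring)
    have h5 : Tendsto (fun x : ℝ => (x + α)⁻¹) (nhdsWithin 0 (Set.Ioi 0)) (nhds α⁻¹) := by
      have : Tendsto (fun x : ℝ => x + α) (nhdsWithin 0 (Set.Ioi 0)) (nhds α) := by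
        have := ((continuous_add_right α).tendsto (0:ℝ)).mono_left
          (nhdsWithin_le_nhds : nhdsWithin (0:ℝ) (Set.Ioi 0) ≤ nhds 0)
        simpa using this
      exact this.inv₀ (ne_of_gt hα0)
    have h6 := h2.atTop_mul_pos (inv_pos.mpr hα0) h5
    refine h6.congr' ?_
    filter_upwards [self_mem_nhdsWithin] with x hx
    have hx0 : 0 < x := hx
    have hxpow : x ^ (2*D) = x ^ (2*D - 1) * x := by
      rw [← Real.rpow_add_one (ne_of_gt hx0)]; ring_nf
    rw [hxpow]
    have hxa : 0 < x + α := by linarith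
    field_simp
end

section
/- Assume i(T) ≥ 2, τ_{i(T)} < T, and m < K·α. Then Q_T is twice differentiable on the open interval (m, m+α); at every t ∈ (m, m+α) with Q_T′(t) = 0 one has Q_T″(t) > 0; and there exists exactly one γ ∈ (m, m+α) with Q_T′(γ) = 0. This γ is the unique minimizer of Q_T on (m, m+α). -/
open MeasureTheory Filter Set

theorem QT_aux (σ p m α : ℝ) (hσ : 0 < σ) (hp : 0 < p) (hp1 : p < 1)
    (hm : 0 < m) (hα : 0 < α)
    (hgm : p * (α ^ (p-1) * m) < m ^ p)
    (Q : ℝ → ℝ)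
    (hQ : Set.EqOn Q (fun u => σ^2 * ((m^p + α^p) - (m + α - u)^p) / u) (Set.Ioo m (m+α))) :
    (∀ t ∈ Set.Ioo m (m + α),
        DifferentiableAt ℝ Q t ∧
        DifferentiableAt ℝ (deriv Q) t ∧
        (deriv Q t = 0 → 0 < deriv (deriv Q) t)) ∧
    (∃! γ : ℝ, γ ∈ Set.Ioo m (m + α) ∧ deriv Q γ = 0) ∧
    (∀ γ ∈ Set.Ioo m (m + α), deriv Q γ = 0 →
        ∀ t ∈ Set.Ioo m (m + α), t ≠ γ → Q γ < Q t) := by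
  set b : ℝ := m + α with hb
  set c : ℝ := m^p + α^p with hc
  set f : ℝ → ℝ := fun u => σ^2 * (c - (b-u)^p) / u with hf
  set g : ℝ → ℝ := fun u => p * ((b-u)^(p-1) * u) + ((b-u)^p - c) with hg
  have hσ2 : (0:ℝ) < σ^2 := by positivity
  have hcpos : 0 < c := by rw [hc]; positivity
  -- basic facts on the interval
  have hmem : ∀ u ∈ Ioo m b, 0 < b - u ∧ 0 < u := fun u hu =>
    ⟨by linarith [hu.2], lt_trans hm hu.1⟩
  -- derivative of f
  have hfD : ∀ u ∈ Ioo m b, HasDerivAt f (σ^2 * g u / u^2) u := by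
    intro u hu
    obtain ⟨hbu, hu0⟩ := hmem u hu
    have h1 : HasDerivAt (fun x : ℝ => b - x) (-1) u := (hasDerivAt_id u).const_sub b
    have h2 : HasDerivAt (fun x : ℝ => (b-x)^p) (p * (b-u)^(p-1) * (-1)) u :=
      (Real.hasDerivAt_rpow_const (Or.inl (ne_of_gt hbu))).comp u h1
    have h3 : HasDerivAt (fun x : ℝ => σ^2 * (c - (b-x)^p))
        (σ^2 * (0 - p * (b-u)^(p-1) * (-1))) u :=
      ((hasDerivAt_const u c).sub h2).const_mul _
    have h4 := h3.div (hasDerivAt_id u) (ne_of_gt hu0)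
    refine h4.congr_deriv ?_
    simp only [hg, id]
    field_simp
    ring
  have hgD : ∀ u ∈ Ioo m b, HasDerivAt g (p*(1-p)*((b-u)^(p-2)*u)) u := by
    intro u hu
    obtain ⟨hbu, hu0⟩ := hmem u hu
    have h1 : HasDerivAt (fun x : ℝ => b - x) (-1) u := (hasDerivAt_id u).const_sub b
    have h2 : HasDerivAt (fun x : ℝ => (b-x)^p) (p * (b-u)^(p-1) * (-1)) u :=
      (Real.hasDerivAt_rpow_const (Or.inl (ne_of_gt hbu))).comp u h1
    have h2' : HasDerivAt (fun x : ℝ => (b-x)^(p-1)) ((p-1) * (b-u)^(p-1-1) * (-1)) u :=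
      (Real.hasDerivAt_rpow_const (Or.inl (ne_of_gt hbu))).comp u h1
    have h5 : HasDerivAt g
        (p * ((p-1) * (b-u)^(p-1-1) * (-1) * u + (b-u)^(p-1) * 1) + p * (b-u)^(p-1) * (-1)) u :=
      (((h2'.mul (hasDerivAt_id u)).const_mul p)).add (h2.sub_const c)
    convert h5 using 1
    rw [show p - 1 - 1 = p - 2 by ring]
    ring
  -- g is strictly monotone on Ioo m b
  have hgmono : StrictMonoOn g (Ioo m b) := by
    apply strictMonoOn_of_deriv_pos (convex_Ioo m b)
    · intro x hx
      exact ((hgD x hx).differentiableAt.continuousAt).continuousWithinAt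
    · intro x hx
      rw [interior_Ioo] at hx
      obtain ⟨hbx, hx0⟩ := hmem x hx
      rw [(hgD x hx).deriv]
      have : (0:ℝ) < (b-x)^(p-2) := Real.rpow_pos_of_pos hbx _
      have h1p : (0:ℝ) < 1 - p := by linarith
      positivity
  -- value of g at m
  have hgm0 : g m < 0 := by
    have : b - m = α := by rw [hb]; ring
    simp only [hg, this, hc]
    linarith
  -- a point u₁ near b where g is positive
  obtain ⟨u₁, hu₁, hgu₁⟩ : ∃ u₁ ∈ Ioo m b, 0 < g u₁ := by
    set r : ℝ := (p*m/c)^(1/(1-p)) with hr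
    have hrpos : 0 < r := by
      apply Real.rpow_pos_of_pos; positivity
    set δ : ℝ := min r α / 2 with hδ
    have hδpos : 0 < δ := by
      have := lt_min hrpos hα
      positivity
    have hδα : δ < α := by
      have : min r α ≤ α := min_le_right _ _
      rw [hδ]; linarith
    have hδr : δ < r := by
      have : min r α ≤ r := min_le_left _ _
      rw [hδ]; linarith
    refine ⟨b - δ, ⟨by rw [hb]; linarith, by linarith⟩, ?_⟩
    have hbδ : b - (b - δ) = δ := by ring
    have key : δ^(1-p) < p*m/c := by
      have h1 : δ^(1-p) < r^(1-p) :=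
        Real.rpow_lt_rpow (le_of_lt hδpos) hδr (by linarith)
      have h2 : r^(1-p) = p*m/c := by
        rw [hr, ← Real.rpow_mul (by positivity),
          one_div_mul_cancel (by linarith : (1:ℝ) - p ≠ 0), Real.rpow_one]
      rw [h2] at h1; exact h1
    have hδp1 : (0:ℝ) < δ^(p-1) := Real.rpow_pos_of_pos hδpos _
    have hinv : δ^(1-p) * δ^(p-1) = 1 := by
      rw [← Real.rpow_add hδpos]; norm_num
    have hc2 : c < p * m * δ^(p-1) := by
      have h3 : c * δ^(1-p) < p * m := by
        rw [div_eq_mul_inv] at key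
        have := mul_lt_mul_of_pos_left key hcpos
        calc c * δ^(1-p) < c * (p*m * c⁻¹) := this
          _ = p * m := by field_simp
      have := mul_lt_mul_of_pos_right h3 hδp1
      calc c = c * 1 := by ring
        _ = c * (δ^(1-p) * δ^(p-1)) := by rw [hinv]
        _ = c * δ^(1-p) * δ^(p-1) := by ring
        _ < p * m * δ^(p-1) := this
    have hbm : m < b - δ := by rw [hb]; linarith
    simp only [hg, hbδ]
    have hδppos : (0:ℝ) < δ^p := Real.rpow_pos_of_pos hδpos _
    nlinarith [mul_lt_mul_of_pos_left hbm (mul_pos hp hδp1)]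
  -- the root γ₀
  obtain ⟨γ₀, hγ₀mem, hγ₀⟩ : ∃ γ₀ ∈ Ioo m u₁, g γ₀ = 0 := by
    have hcont : ContinuousOn g (Icc m u₁) := by
      intro x hx
      have hx' : 0 < b - x := by
        have : x ≤ u₁ := hx.2
        have := hu₁.2
        linarith
      have hxm : x ∈ Ioo m b ∨ x = m := by
        rcases eq_or_lt_of_le hx.1 with h | h
        · exact Or.inr h.symm
        · exact Or.inl ⟨h, by linarith [hx.2, hu₁.2]⟩
      rcases hxm with h | h
      · exact ((hgD x h).differentiableAt.continuousAt).continuousWithinAt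
      · -- continuity at m directly
        subst h
        apply ContinuousAt.continuousWithinAt
        have h1 : ContinuousAt (fun x : ℝ => b - x) x := by fun_prop
        have h2 : ContinuousAt (fun x : ℝ => (b-x)^(p-1)) x :=
          (Real.continuousAt_rpow_const _ _ (Or.inl (ne_of_gt hx'))).comp h1
        have h3 : ContinuousAt (fun x : ℝ => (b-x)^p) x :=
          (Real.continuousAt_rpow_const _ _ (Or.inl (ne_of_gt hx'))).comp h1
        exact ((h2.mul continuousAt_id).const_mul p).add (h3.sub continuousAt_const)
    have h0 : (0:ℝ) ∈ Ioo (g m) (g u₁) := ⟨hgm0, hgu₁⟩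
    obtain ⟨γ₀, hγ₀mem, hγ₀⟩ := intermediate_value_Ioo (le_of_lt hu₁.1) hcont h0
    exact ⟨γ₀, hγ₀mem, hγ₀⟩
  have hγ₀b : γ₀ ∈ Ioo m b := ⟨hγ₀mem.1, lt_trans hγ₀mem.2 hu₁.2⟩
  -- relate deriv Q to f and g
  have hQf : ∀ t ∈ Ioo m b, Q =ᶠ[nhds t] f :=
    fun t ht => Filter.eventuallyEq_of_mem (isOpen_Ioo.mem_nhds ht) hQ
  have hderivQ : ∀ t ∈ Ioo m b, deriv Q t = σ^2 * g t / t^2 := by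
    intro t ht
    rw [(hQf t ht).deriv_eq, (hfD t ht).deriv]
  have hcrit : ∀ t ∈ Ioo m b, (deriv Q t = 0 ↔ g t = 0) := by
    intro t ht
    rw [hderivQ t ht]
    obtain ⟨_, ht0⟩ := hmem t ht
    rw [div_eq_zero_iff]
    constructor
    · rintro (h | h)
      · rcases mul_eq_zero.mp h with h | h
        · exact absurd h (by positivity)
        · exact h
      · exact absurd h (by positivity)
    · intro h; left; rw [h]; ring
  -- second derivative function
  set f2 : ℝ → ℝ := fun t => σ^2 * g t / t^2 with hf2
  have hf2D : ∀ t ∈ Ioo m b, HasDerivAt f2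
      ((σ^2 * (p*(1-p)*((b-t)^(p-2)*t)) * t^2 - σ^2 * g t * (2*t)) / (t^2)^2) t := by
    intro t ht
    obtain ⟨_, ht0⟩ := hmem t ht
    have hnum : HasDerivAt (fun t => σ^2 * g t) (σ^2 * (p*(1-p)*((b-t)^(p-2)*t))) t :=
      (hgD t ht).const_mul _
    have hden : HasDerivAt (fun t : ℝ => t^2) (2*t) t := by
      have := hasDerivAt_pow 2 t
      exact this.congr_deriv (by push_cast; ring)
    exact hnum.div hden (by positivity)
  have hderivQ_ev : ∀ t ∈ Ioo m b, deriv Q =ᶠ[nhds t] f2 := by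
    intro t ht
    have h1 : deriv Q =ᶠ[nhds t] deriv f := (hQf t ht).deriv
    have h2 : deriv f =ᶠ[nhds t] f2 :=
      Filter.eventuallyEq_of_mem (isOpen_Ioo.mem_nhds ht) (fun x hx => (hfD x hx).deriv)
    exact h1.trans h2
  -- first conjunct
  refine ⟨?_, ?_, ?_⟩
  · intro t ht
    obtain ⟨hbt, ht0⟩ := hmem t ht
    refine ⟨(hQf t ht).differentiableAt_iff.mpr (hfD t ht).differentiableAt, ?_, ?_⟩
    · exact (hderivQ_ev t ht).differentiableAt_iff.mpr (hf2D t ht).differentiableAt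
    · intro hcr
      have hgt0 : g t = 0 := (hcrit t ht).mp hcr
      have := (hderivQ_ev t ht).deriv_eq
      rw [this, (hf2D t ht).deriv, hgt0]
      have h1 : (0:ℝ) < (b-t)^(p-2) := Real.rpow_pos_of_pos hbt _
      have h2 : (0:ℝ) < 1 - p := by linarith
      have e : (σ^2 * (p*(1-p)*((b-t)^(p-2)*t)) * t^2 - σ^2 * 0 * (2*t)) / (t^2)^2
          = σ^2 * (p*(1-p)*(b-t)^(p-2)) / t := by
        field_simp
        ring
      rw [e]
      positivity
  · -- unique critical point
    refine ⟨γ₀, ⟨hγ₀b, (hcrit γ₀ hγ₀b).mpr hγ₀⟩, ?_⟩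
    rintro γ' ⟨hγ'mem, hγ'crit⟩
    exact hgmono.injOn hγ'mem hγ₀b (by rw [(hcrit γ' hγ'mem).mp hγ'crit, hγ₀])
  · -- minimizer
    intro γ hγmem hγcrit t htmem htne
    have hgγ : g γ = 0 := (hcrit γ hγmem).mp hγcrit
    have hQt : Q t = f t := hQ htmem
    have hQγ : Q γ = f γ := hQ hγmem
    rw [hQt, hQγ]
    have hcontf : ∀ s : Set ℝ, s ⊆ Ioo m b → ContinuousOn f s := by
      intro s hs x hx
      exact ((hfD x (hs hx)).differentiableAt.continuousAt).continuousWithinAt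
    rcases lt_or_gt_of_ne htne with hlt | hgt
    · -- t < γ : f strictly decreasing on [t, γ]
      have hsub : Icc t γ ⊆ Ioo m b := fun x hx => ⟨lt_of_lt_of_le htmem.1 hx.1,
        lt_of_le_of_lt hx.2 hγmem.2⟩
      have hanti : StrictAntiOn f (Icc t γ) := by
        apply strictAntiOn_of_deriv_neg (convex_Icc t γ) (hcontf _ hsub)
        intro x hx
        rw [interior_Icc] at hx
        have hxmem : x ∈ Ioo m b := hsub ⟨le_of_lt hx.1, le_of_lt hx.2⟩
        rw [(hfD x hxmem).deriv]
        have hgx : g x < 0 := by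
          have := hgmono hxmem hγmem hx.2
          linarith [hgγ ▸ this]
        obtain ⟨_, hx0⟩ := hmem x hxmem
        have : σ^2 * g x < 0 := mul_neg_of_pos_of_neg hσ2 hgx
        exact div_neg_of_neg_of_pos this (by positivity)
      exact hanti ⟨le_refl t, le_of_lt hlt⟩ ⟨le_of_lt hlt, le_refl γ⟩ hlt
    · -- γ < t : f strictly increasing on [γ, t]
      have hsub : Icc γ t ⊆ Ioo m b := fun x hx => ⟨lt_of_lt_of_le hγmem.1 hx.1,
        lt_of_le_of_lt hx.2 htmem.2⟩
      have hmono : StrictMonoOn f (Icc γ t) := by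
        apply strictMonoOn_of_deriv_pos (convex_Icc γ t) (hcontf _ hsub)
        intro x hx
        rw [interior_Icc] at hx
        have hxmem : x ∈ Ioo m b := hsub ⟨le_of_lt hx.1, le_of_lt hx.2⟩
        rw [(hfD x hxmem).deriv]
        have hgx : 0 < g x := by
          have := hgmono hγmem hxmem hx.1
          linarith [hgγ ▸ this]
        obtain ⟨_, hx0⟩ := hmem x hxmem
        positivity
      exact hmono ⟨le_refl γ, le_of_lt hgt⟩ ⟨le_of_lt hgt, le_refl t⟩ hgt



/-- Assume `i(T) ≥ 2`, `τ_{i(T)} < T` and `m < K·α`. Then `Q_T` is twice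
differentiable on `(m, m+α)`; at every `t ∈ (m, m+α)` with `Q_T′(t) = 0` one has
`Q_T″(t) > 0`; there is exactly one `γ ∈ (m, m+α)` with `Q_T′(γ) = 0`; and this `γ` is
the unique minimizer of `Q_T` on `(m, m+α)`. -/
theorem QT_unique_minimum_between_jumps
    (D σ : ℝ) (hD : D ∈ Set.Ioo (0 : ℝ) (1/2)) (hσ : 0 < σ)
    (τ : ℤ → ℝ) (hτmono : StrictMono τ) (hτ0 : τ 0 < 0) (hτ1 : 0 < τ 1)
    (hτtop : Tendsto τ atTop atTop) (hτbot : Tendsto τ atBot atBot)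
    (i : ℝ → ℕ)
    (hi : ∀ t : ℝ, 0 ≤ t → τ (i t) ≤ t ∧ t < τ ((i t : ℤ) + 1))
    (I : ℝ → ℝ)
    (hI : ∀ t : ℝ, 0 ≤ t →
      I t = σ^2 * ((t - τ (i t)) ^ (2*D)
        + (∑ k ∈ Finset.range (i t), (τ ((k : ℤ) + 1) - τ (k : ℤ)) ^ (2*D))
        - (-τ 0) ^ (2*D)))
    (T : ℝ) (hT : 0 < T) (hiT : 2 ≤ i T) (hlast : τ (i T) < T)
    (m α K : ℝ)
    (hm : m = T - τ (i T)) (hα : α = τ (i T) - τ ((i T : ℤ) - 1))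
    (hK : K = (1 / (2*D)) ^ (1 / (1 - 2*D)))
    (hmK : m < K * α) :
    (∀ t ∈ Set.Ioo m (m + α),
        DifferentiableAt ℝ (fun u : ℝ => (I T - I (T - u)) / u) t ∧
        DifferentiableAt ℝ (deriv (fun u : ℝ => (I T - I (T - u)) / u)) t ∧
        (deriv (fun u : ℝ => (I T - I (T - u)) / u) t = 0 →
          0 < deriv (deriv (fun u : ℝ => (I T - I (T - u)) / u)) t)) ∧
    (∃! γ : ℝ, γ ∈ Set.Ioo m (m + α) ∧
        deriv (fun u : ℝ => (I T - I (T - u)) / u) γ = 0) ∧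
    (∀ γ ∈ Set.Ioo m (m + α),
        deriv (fun u : ℝ => (I T - I (T - u)) / u) γ = 0 →
        ∀ t ∈ Set.Ioo m (m + α), t ≠ γ →
          (I T - I (T - γ)) / γ < (I T - I (T - t)) / t) := by
  obtain ⟨hD0, hD12⟩ := hD
  set p : ℝ := 2*D with hpdef
  have hp : 0 < p := by rw [hpdef]; linarith
  have hp1 : p < 1 := by rw [hpdef]; linarith
  set n : ℕ := i T with hn
  obtain ⟨hTn1, hTn2⟩ := hi T (le_of_lt hT)
  have hm0 : 0 < m := by rw [hm]; linarith
  have hα0 : 0 < α := by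
    rw [hα]
    have := hτmono (show (n:ℤ)-1 < (n:ℤ) by omega)
    linarith
  -- the key inequality g(m) < 0
  have hKpos : 0 < K := by rw [hK]; positivity
  have h3 : K^(1-p) = 1/p := by
    rw [hK, ← Real.rpow_mul (by positivity),
      one_div_mul_cancel (by linarith : (1:ℝ) - p ≠ 0), Real.rpow_one]
  have hstep : p * m^(1-p) < α^(1-p) := by
    have h1 : m^(1-p) < (K*α)^(1-p) :=
      Real.rpow_lt_rpow hm0.le hmK (by linarith)
    have h2 : (K*α)^(1-p) = K^(1-p) * α^(1-p) := Real.mul_rpow hKpos.le hα0.le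
    have h5 : m^(1-p) < 1/p * α^(1-p) := by
      rw [← h3, ← h2]; exact h1
    calc p * m^(1-p) < p * (1/p * α^(1-p)) := mul_lt_mul_of_pos_left h5 hp
      _ = α^(1-p) := by field_simp
  have e1 : m^(1-p) * m^p = m := by
    rw [← Real.rpow_add hm0]; norm_num
  have e2 : α^(1-p) * α^(p-1) = 1 := by
    rw [← Real.rpow_add hα0]; norm_num
  have hA : (0:ℝ) < α^(p-1) * m^p := by
    have := Real.rpow_pos_of_pos hα0 (p-1)
    have := Real.rpow_pos_of_pos hm0 p
    positivity
  have hgm : p * (α^(p-1) * m) < m^p := by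
    have h4 := mul_lt_mul_of_pos_right hstep hA
    calc p * (α^(p-1) * m) = p * m^(1-p) * (α^(p-1) * m^p) := by
          linear_combination (-(p * α^(p-1))) * e1
      _ < α^(1-p) * (α^(p-1) * m^p) := h4
      _ = m^p := by linear_combination (m^p) * e2
  -- the identification of Q on the interval
  have hQeq : Set.EqOn (fun u : ℝ => (I T - I (T - u)) / u)
      (fun u => σ^2 * ((m^p + α^p) - (m + α - u)^p) / u) (Set.Ioo m (m+α)) := by
    intro u hu
    obtain ⟨hu1, hu2⟩ := hu
    show (I T - I (T - u)) / u = σ^2 * ((m^p + α^p) - (m + α - u)^p) / u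
    have hTu_lt : T - u < τ (n:ℤ) := by rw [hm] at hu1; linarith
    have hTu_gt : τ ((n:ℤ)-1) < T - u := by
      rw [hm, hα] at hu2; linarith
    have hτn1pos : 0 < τ ((n:ℤ)-1) :=
      lt_of_lt_of_le hτ1 (hτmono.monotone (by omega : (1:ℤ) ≤ (n:ℤ)-1))
    have hTupos : (0:ℝ) ≤ T - u := by linarith
    obtain ⟨hA1, hA2⟩ := hi (T-u) hTupos
    have hidx : (i (T-u) : ℤ) = (n:ℤ) - 1 := by
      have hlt1 : (i (T-u) : ℤ) < (n:ℤ) :=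
        hτmono.lt_iff_lt.mp (lt_of_le_of_lt hA1 hTu_lt)
      have hlt2 : (n:ℤ) - 1 < (i (T-u) : ℤ) + 1 :=
        hτmono.lt_iff_lt.mp (lt_trans hTu_gt hA2)
      omega
    have hidxn : i (T-u) = n - 1 := by omega
    have hcast : ((n-1 : ℕ) : ℤ) = (n:ℤ) - 1 := by omega
    have hsum := Finset.sum_range_succ
      (fun k : ℕ => (τ ((k:ℤ)+1) - τ (k:ℤ)) ^ p) (n-1)
    rw [show n - 1 + 1 = n from by omega] at hsum
    rw [hcast, show (n:ℤ) - 1 + 1 = (n:ℤ) from by ring] at hsum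
    have ebu : T - u - τ ((n:ℤ)-1) = m + α - u := by rw [hm, hα]; ring
    rw [hI T hT.le, hI (T-u) hTupos, ← hn, hidxn, hcast, hsum, ebu, ← hm, ← hα]
    ring
  exact QT_aux σ p m α hσ hp hp1 hm0 hα0 hgm _ hQeq
end

section
/- For every δ with 0 < δ < 1/(1 − 2D) there exists a constant C < ∞ such that E[I(t)^δ] ≤ C·t^δ for all t ∈ (0, 1]. In particular, the family of random variables {I(t)/t : t ∈ (0, 1]} is bounded in L^δ. -/
open MeasureTheory Filter Set

lemma aux_bernoulli {x t p : ℝ} (hx : 0 < x) (ht : 0 ≤ t) (hp0 : 0 ≤ p) (hp1 : p ≤ 1) :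
    (x + t) ^ p ≤ x ^ p + p * t * x ^ (p - 1) := by
  have h1 : x + t = x * (1 + t / x) := by field_simp
  have h2 : (0:ℝ) ≤ 1 + t / x := by positivity
  have h3 : (1 + t / x) ^ p ≤ 1 + p * (t / x) :=
    rpow_one_add_le_one_add_mul_self (by nlinarith [div_nonneg ht hx.le]) hp0 hp1
  calc (x + t) ^ p = x ^ p * (1 + t / x) ^ p := by rw [h1, Real.mul_rpow hx.le h2]
    _ ≤ x ^ p * (1 + p * (t / x)) :=
        mul_le_mul_of_nonneg_left h3 (Real.rpow_nonneg hx.le p)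
    _ = x ^ p + p * t * x ^ (p - 1) := by
        rw [Real.rpow_sub hx, Real.rpow_one]; field_simp

lemma aux_subadd {a c p : ℝ} (ha : 0 ≤ a) (hc : 0 ≤ c) (hp0 : 0 ≤ p) (hp1 : p ≤ 1) :
    (a + c) ^ p ≤ a ^ p + c ^ p := by
  have key := NNReal.rpow_add_le_add_rpow a.toNNReal c.toNNReal hp0 hp1
  rw [show a = ((a.toNNReal : ℝ)) from (Real.coe_toNNReal a ha).symm,
      show c = ((c.toNNReal : ℝ)) from (Real.coe_toNNReal c hc).symm]
  exact_mod_cast key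
lemma aux_expmoment {Ω : Type*} [MeasurableSpace Ω] (μ : Measure Ω) [IsProbabilityMeasure μ]
    (X : Ω → ℝ) (hX : Measurable X) (lam b : ℝ) (hlam : 0 < lam) (hb0 : 0 < b) (hb1 : b < 1)
    (hcdf : ∀ s : ℝ, 0 ≤ s → μ {ω | X ω ≤ s} = ENNReal.ofReal (1 - Real.exp (-lam * s))) :
    ∫⁻ ω, ENNReal.ofReal ((X ω) ^ (-b)) ∂μ < ⊤ := by
  have hX0 : μ {ω | X ω ≤ 0} = 0 := by
    rw [hcdf 0 le_rfl]; simp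
  have hXpos : ∀ᵐ ω ∂μ, 0 < X ω := by
    rw [ae_iff]; convert hX0 using 2; ext ω; simp
  -- layer cake
  rw [lintegral_eq_lintegral_meas_lt μ
    (by filter_upwards [hXpos] with ω hω; exact Real.rpow_nonneg hω.le _)
    ((hX.pow_const _).aemeasurable)]
  -- pointwise bound on the superlevel measure for s > 0
  have key : ∀ s : ℝ, 0 < s →
      μ {ω | s < X ω ^ (-b)} ≤ ENNReal.ofReal (lam * s ^ (-(1/b))) := by
    intro s hs
    have hsub : {ω | s < X ω ^ (-b)} ∩ {ω | 0 < X ω} ⊆ {ω | X ω ≤ s ^ (-(1/b))} := by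
      intro ω ⟨h1, h2⟩
      by_contra hcon
      simp only [mem_setOf_eq, not_le] at hcon
      have hspow : (0:ℝ) < s ^ (-(1/b)) := Real.rpow_pos_of_pos hs _
      have := Real.rpow_lt_rpow_of_neg hspow hcon (neg_lt_zero.mpr hb0)
      rw [← Real.rpow_mul hs.le] at this
      have hbb : -(1/b) * -b = 1 := by field_simp
      rw [hbb, Real.rpow_one] at this
      exact absurd h1 (not_lt.mpr this.le)
    calc μ {ω | s < X ω ^ (-b)}
        ≤ μ ({ω | s < X ω ^ (-b)} ∩ {ω | 0 < X ω}) + μ {ω | X ω ≤ 0} := by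
          refine (measure_le_inter_add_diff μ _ {ω | 0 < X ω}).trans ?_
          gcongr
          intro ω hω
          simp only [mem_diff, mem_setOf_eq, not_lt] at hω ⊢
          exact hω.2
      _ = μ ({ω | s < X ω ^ (-b)} ∩ {ω | 0 < X ω}) := by rw [hX0, add_zero]
      _ ≤ μ {ω | X ω ≤ s ^ (-(1/b))} := measure_mono hsub
      _ = ENNReal.ofReal (1 - Real.exp (-lam * s ^ (-(1/b)))) :=
          hcdf _ (Real.rpow_nonneg hs.le _)
      _ ≤ ENNReal.ofReal (lam * s ^ (-(1/b))) := by
          apply ENNReal.ofReal_le_ofReal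
          have := Real.add_one_le_exp (-(lam * s ^ (-(1/b))))
          rw [neg_mul]
          linarith
  have hsplit : Ioi (0:ℝ) = Ioc 0 1 ∪ Ioi 1 := (Set.Ioc_union_Ioi_eq_Ioi zero_le_one).symm
  rw [hsplit, lintegral_union measurableSet_Ioi (Set.Ioc_disjoint_Ioi le_rfl)]
  have h1 : ∫⁻ s in Ioc (0:ℝ) 1, μ {ω | s < X ω ^ (-b)} ≤ 1 := by
    calc ∫⁻ s in Ioc (0:ℝ) 1, μ {ω | s < X ω ^ (-b)}
        ≤ ∫⁻ _ in Ioc (0:ℝ) 1, 1 := lintegral_mono fun s => prob_le_one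
      _ = 1 := by simp
  have h2 : ∫⁻ s in Ioi (1:ℝ), μ {ω | s < X ω ^ (-b)} < ⊤ := by
    have hintb : IntegrableOn (fun s : ℝ => lam * s ^ (-(1/b))) (Ioi 1) := by
      refine (integrableOn_Ioi_rpow_of_lt ?_ one_pos).const_mul lam
      rw [neg_lt_neg_iff]
      rw [lt_div_iff₀ hb0]; linarith
    calc ∫⁻ s in Ioi (1:ℝ), μ {ω | s < X ω ^ (-b)}
        ≤ ∫⁻ s in Ioi (1:ℝ), ENNReal.ofReal (lam * s ^ (-(1/b))) := by
          refine setLIntegral_mono' measurableSet_Ioi fun s hs => key s (lt_trans one_pos hs)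
      _ = ENNReal.ofReal (∫ s in Ioi (1:ℝ), lam * s ^ (-(1/b))) := by
          rw [← ofReal_integral_eq_lintegral_ofReal hintb]
          filter_upwards [ae_restrict_mem measurableSet_Ioi] with s hs
          have : (0:ℝ) < s := lt_trans one_pos hs
          positivity
      _ < ⊤ := ENNReal.ofReal_lt_top
  exact lt_of_le_of_lt (add_le_add h1 le_rfl)
    (ENNReal.add_lt_top.mpr ⟨ENNReal.one_lt_top, h2⟩)
lemma aux_poisson {lam t : ℝ} (m k : ℕ) (hlam : 0 < lam) (ht0 : 0 < t) (ht1 : t ≤ 1) :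
    ((k:ℝ) + 2) ^ m * (Real.exp (-lam * t) * (lam * t) ^ (k+1) / (k+1).factorial)
      ≤ lam * t * (2 ^ m * ((2 ^ m * lam) ^ k / k.factorial)) := by
  have hexp : Real.exp (-lam * t) ≤ 1 := Real.exp_le_one_iff.mpr (by nlinarith)
  have hlt : 0 ≤ lam * t := by positivity
  have h2 : ((k:ℝ) + 2) ^ m ≤ (2:ℝ) ^ ((k+1) * m) := by
    have hk : (k:ℝ) + 2 ≤ (2:ℝ) ^ (k+1) := by
      have := Nat.lt_two_pow_self (n := k+1)
      exact_mod_cast Nat.succ_le_of_lt this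
    calc ((k:ℝ) + 2) ^ m ≤ ((2:ℝ) ^ (k+1)) ^ m := by
          exact pow_le_pow_left₀ (by positivity) hk m
      _ = (2:ℝ) ^ ((k+1) * m) := by rw [← pow_mul]
  have hpow : (lam * t) ^ (k+1) ≤ lam * t * lam ^ k := by
    rw [pow_succ']
    have : (lam * t) ^ k ≤ lam ^ k := by
      refine pow_le_pow_left₀ hlt ?_ k
      nlinarith
    nlinarith [pow_nonneg hlt k]
  have hfact : (1:ℝ) / (k+1).factorial ≤ 1 / k.factorial := by
    apply one_div_le_one_div_of_le
    · exact_mod_cast Nat.factorial_pos k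
    · exact_mod_cast Nat.factorial_le (Nat.le_succ k)
  have hfp : (0:ℝ) < k.factorial := by exact_mod_cast Nat.factorial_pos k
  have hfp1 : (0:ℝ) < (k+1).factorial := by exact_mod_cast Nat.factorial_pos (k+1)
  have key : (2:ℝ) ^ ((k+1)*m) * lam ^ k = 2 ^ m * (2 ^ m * lam) ^ k := by
    rw [mul_pow, ← pow_mul]
    ring
  calc ((k:ℝ) + 2) ^ m * (Real.exp (-lam * t) * (lam * t) ^ (k+1) / (k+1).factorial)
      ≤ (2:ℝ) ^ ((k+1)*m) * ((lam * t * lam ^ k) / k.factorial) := by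
        apply mul_le_mul h2 ?_ (by positivity) (by positivity)
        apply div_le_div₀ (by positivity) ?_ hfp
          (by exact_mod_cast Nat.factorial_le (Nat.le_succ k))
        · calc Real.exp (-lam * t) * (lam * t) ^ (k+1) ≤ 1 * (lam * t * lam ^ k) := by
                apply mul_le_mul hexp hpow (by positivity) (by norm_num)
            _ = lam * t * lam ^ k := one_mul _
    _ = lam * t * (2 ^ m * ((2 ^ m * lam) ^ k / k.factorial)) := by
        field_simp [← key]; ring
lemma aux_pointwise {f : ℤ → ℝ} {t σ p : ℝ} (n : ℕ)
    (hmono : StrictMono f) (hf0 : f 0 < 0) (hf1 : 0 < f 1)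
    (hfn : f n ≤ t) (ht0 : 0 < t) (hp0 : 0 < p) (hp1 : p < 1) (hσ : 0 < σ) :
    0 ≤ σ^2 * ((t - f n) ^ p + (∑ k ∈ Finset.range n, (f ((k:ℤ) + 1) - f (k:ℤ)) ^ p)
        - (-f 0) ^ p) ∧
    (n = 0 → σ^2 * ((t - f n) ^ p + (∑ k ∈ Finset.range n, (f ((k:ℤ) + 1) - f (k:ℤ)) ^ p)
        - (-f 0) ^ p) ≤ σ^2 * p * t * (-f 0) ^ (p - 1)) ∧
    (∀ j : ℕ, n = j + 1 →
      σ^2 * ((t - f n) ^ p + (∑ k ∈ Finset.range n, (f ((k:ℤ) + 1) - f (k:ℤ)) ^ p)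
        - (-f 0) ^ p) ≤ σ^2 * ((j:ℝ) + 2) * t ^ p) := by
  have hX : 0 < -f 0 := by linarith
  rcases n with _ | j
  · -- n = 0
    simp only [Nat.cast_zero, Finset.range_zero, Finset.sum_empty, add_zero]
    have hb := aux_bernoulli (t := t) hX ht0.le hp0.le hp1.le
    have heq : t - f 0 = -f 0 + t := by ring
    have hge : (-f 0) ^ p ≤ (t - f 0) ^ p := by
      rw [heq]; exact Real.rpow_le_rpow hX.le (by linarith) hp0.le
    constructor
    · nlinarith [sq_nonneg σ]
    refine ⟨fun _ => ?_, fun j hj => by simp at hj⟩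
    rw [heq]
    nlinarith [sq_nonneg σ, hb]
  · -- n = j + 1
    set n := j + 1 with hn
    have h1n : (1:ℤ) ≤ (n:ℤ) := by exact_mod_cast Nat.one_le_iff_ne_zero.mpr (by omega)
    have hτ1n : f 1 ≤ f (n:ℤ) := hmono.monotone h1n
    have hfnpos : 0 < f (n:ℤ) := lt_of_lt_of_le hf1 hτ1n
    have hAle : (t - f (n:ℤ)) ^ p ≤ t ^ p :=
      Real.rpow_le_rpow (by linarith) (by linarith) hp0.le
    have hA0 : 0 ≤ (t - f (n:ℤ)) ^ p := Real.rpow_nonneg (by linarith) _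
    -- termwise bounds on the sum
    have hterm : ∀ k ∈ Finset.range n, (f ((k:ℤ) + 1) - f (k:ℤ)) ^ p
        ≤ t ^ p + (if k = 0 then (-f 0) ^ p else 0) := by
      intro k hk
      rcases Nat.eq_zero_or_pos k with hk0 | hkpos
      · subst hk0
        simp only [if_pos rfl, Nat.cast_zero, zero_add]
        have : f 1 - f 0 = f 1 + (-f 0) := by ring
        rw [this]
        calc (f 1 + (-f 0)) ^ p ≤ (f 1) ^ p + (-f 0) ^ p :=
              aux_subadd hf1.le hX.le hp0.le hp1.le
          _ ≤ t ^ p + (-f 0) ^ p := by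
              have : f 1 ≤ t := le_trans hτ1n hfn
              have := Real.rpow_le_rpow hf1.le this hp0.le
              linarith
      · rw [if_neg (by omega), add_zero]
        have hk1 : (1:ℤ) ≤ (k:ℤ) := by exact_mod_cast hkpos
        have hposk : 0 < f (k:ℤ) := lt_of_lt_of_le hf1 (hmono.monotone hk1)
        have hkn : (k:ℤ) + 1 ≤ (n:ℤ) := by
          have := Finset.mem_range.mp hk; exact_mod_cast this
        have hle : f ((k:ℤ)+1) ≤ t := le_trans (hmono.monotone hkn) hfn
        exact Real.rpow_le_rpow (by linarith [hmono (show (k:ℤ) < k+1 by omega)])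
          (by linarith) hp0.le
    have hsum : (∑ k ∈ Finset.range n, (f ((k:ℤ) + 1) - f (k:ℤ)) ^ p)
        ≤ (n:ℝ) * t ^ p + (-f 0) ^ p := by
      calc (∑ k ∈ Finset.range n, (f ((k:ℤ) + 1) - f (k:ℤ)) ^ p)
          ≤ ∑ k ∈ Finset.range n, (t ^ p + (if k = 0 then (-f 0) ^ p else 0)) :=
            Finset.sum_le_sum hterm
        _ = (n:ℝ) * t ^ p + (-f 0) ^ p := by
            rw [Finset.sum_add_distrib, Finset.sum_const, Finset.sum_ite_eq' (Finset.range n) 0]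
            simp [Finset.mem_range, hn, nsmul_eq_mul]
    have hsum_ge : (-f 0) ^ p ≤ ∑ k ∈ Finset.range n, (f ((k:ℤ) + 1) - f (k:ℤ)) ^ p := by
      have h0mem : 0 ∈ Finset.range n := by simp [hn]
      calc (-f 0) ^ p ≤ (f (((0:ℕ):ℤ) + 1) - f ((0:ℕ):ℤ)) ^ p := by
            push_cast
            have : -f 0 ≤ f 1 - f 0 := by linarith
            exact Real.rpow_le_rpow hX.le this hp0.le
        _ ≤ ∑ k ∈ Finset.range n, (f ((k:ℤ) + 1) - f (k:ℤ)) ^ p := by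
            exact Finset.single_le_sum
              (f := fun k : ℕ => (f ((k:ℤ) + 1) - f (k:ℤ)) ^ p)
              (fun k hk => Real.rpow_nonneg
                (by have := hmono (show (k:ℤ) < (k:ℤ)+1 by omega); linarith) p) h0mem
    refine ⟨by nlinarith [sq_nonneg σ], fun h0 => by omega, fun j' hj' => ?_⟩
    have hj'' : (j':ℝ) = (j:ℝ) := by
      have : j' = j := by omega
      exact_mod_cast this
    have hcast : ((n:ℕ):ℝ) = (j:ℝ) + 1 := by rw [hn]; push_cast; ring
    rw [hj'', show σ^2*((j:ℝ)+2)*t^p = σ^2*(((j:ℝ)+2)*t^p) by ring]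
    refine mul_le_mul_of_nonneg_left ?_ (sq_nonneg σ)
    rw [hcast] at hsum
    linarith
/-- Uniform integrability lemma: for `0 < δ < 1/(1−2D)` there is a
constant `C < ∞` with `E[I(t)^δ] ≤ C·t^δ` for all `t ∈ (0,1]`; in particular the family
`{I(t)/t : t ∈ (0,1]}` is bounded in `L^δ`. Here `−τ₀ ~ Exp(λ)` and, for each
`t ∈ (0,1]`, `i(t)` is Poisson of mean `λt` and independent of `τ₀`. -/
theorem timeChange_Lp_bounded
    {Ω : Type*} [MeasurableSpace Ω] (μ : Measure Ω) [IsProbabilityMeasure μ]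
    (D σ lam : ℝ) (hD : D ∈ Set.Ioo (0 : ℝ) (1/2)) (hσ : 0 < σ) (hlam : 0 < lam)
    (τ : ℤ → Ω → ℝ) (i : ℝ → Ω → ℕ) (I : ℝ → Ω → ℝ)
    (hτ : ∀ᵐ ω ∂μ, StrictMono (fun n => τ n ω) ∧ τ 0 ω < 0 ∧ 0 < τ 1 ω)
    (hi : ∀ t : ℝ, 0 < t →
      ∀ᵐ ω ∂μ, τ (i t ω) ω ≤ t ∧ t < τ ((i t ω : ℤ) + 1) ω)
    (hIdef : ∀ t : ℝ, 0 < t → ∀ ω,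
      I t ω = σ^2 * ((t - τ (i t ω) ω) ^ (2*D)
        + (∑ k ∈ Finset.range (i t ω), (τ ((k : ℤ) + 1) ω - τ (k : ℤ) ω) ^ (2*D))
        - (-τ 0 ω) ^ (2*D)))
    (hImeas : ∀ t : ℝ, Measurable (I t))
    (hτ0meas : Measurable (τ 0)) (himeas : ∀ t : ℝ, Measurable (i t))
    (hτ0exp : ∀ s : ℝ, 0 ≤ s →
      μ {ω | -τ 0 ω ≤ s} = ENNReal.ofReal (1 - Real.exp (-lam * s)))
    (hindep : ∀ t ∈ Set.Ioc (0 : ℝ) 1, ProbabilityTheory.IndepFun (i t) (τ 0) μ)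
    (hpois : ∀ t ∈ Set.Ioc (0 : ℝ) 1, ∀ k : ℕ,
      μ {ω | i t ω = k} = ENNReal.ofReal (Real.exp (-lam * t) * (lam * t)^k / k.factorial))
    (δ : ℝ) (hδ0 : 0 < δ) (hδ : δ < 1 / (1 - 2*D)) :
    (∃ C : ℝ, ∀ t ∈ Set.Ioc (0 : ℝ) 1,
        ∫⁻ ω, ENNReal.ofReal ((I t ω) ^ δ) ∂μ ≤ ENNReal.ofReal (C * t ^ δ)) ∧
    (∃ M : ℝ, ∀ t ∈ Set.Ioc (0 : ℝ) 1,
        ∫⁻ ω, ENNReal.ofReal ((I t ω / t) ^ δ) ∂μ ≤ ENNReal.ofReal M) := by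
  obtain ⟨hD0, hDhalf⟩ := hD
  set p := 2*D with hpdef
  have hp0 : 0 < p := by simp only [hpdef]; linarith
  have hp1 : p < 1 := by simp only [hpdef]; linarith
  have h1p : 0 < 1 - p := by linarith
  set b := (1-p)*δ with hbdef
  have hb0 : 0 < b := mul_pos h1p hδ0
  have hb1 : b < 1 := by
    have h := (lt_div_iff₀ h1p).mp (by rw [hpdef] at h1p ⊢; exact hδ)
    nlinarith
  set X : Ω → ℝ := fun ω => -τ 0 ω with hXdef
  have hXmeas : Measurable X := hτ0meas.neg
  set K : ENNReal := ∫⁻ ω, ENNReal.ofReal (X ω ^ (-b)) ∂μ with hKdef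
  have hK : K < ⊤ := aux_expmoment μ X hXmeas lam b hlam hb0 hb1 (fun s hs => hτ0exp s hs)
  set m : ℕ := ⌈δ⌉₊ with hmdef
  have hδm : δ ≤ (m:ℝ) := Nat.le_ceil δ
  set q : ℕ → ℝ := fun k => (2:ℝ)^m * ((2^m * lam)^k / k.factorial) with hqdef
  have hq_nonneg : ∀ k, 0 ≤ q k := by
    intro k
    have : (0:ℝ) ≤ (2:ℝ)^m * lam := by positivity
    simp only [hqdef]
    positivity
  have hq_summable : Summable q :=
    (Real.summable_pow_div_factorial ((2:ℝ)^m * lam)).mul_left _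
  set S : ℝ := ∑' k, q k with hSdef
  have hS0 : 0 ≤ S := tsum_nonneg hq_nonneg
  set C1 : ℝ := (σ^2 * p)^δ * K.toReal with hC1def
  set C2 : ℝ := (σ^2)^δ * lam * S with hC2def
  have hC10 : 0 ≤ C1 := mul_nonneg (Real.rpow_nonneg (by positivity) _) ENNReal.toReal_nonneg
  have hC20 : 0 ≤ C2 := by
    apply mul_nonneg (mul_nonneg (Real.rpow_nonneg (by positivity) _) hlam.le) hS0
  have main : ∀ t ∈ Set.Ioc (0 : ℝ) 1,
      ∫⁻ ω, ENNReal.ofReal ((I t ω) ^ δ) ∂μ ≤ ENNReal.ofReal ((C1 + C2) * t ^ δ) := by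
    rintro t ⟨ht0, ht1⟩
    -- pointwise a.e. facts
    have hae : ∀ᵐ ω ∂μ, 0 < X ω ∧ 0 ≤ I t ω ∧
        (i t ω = 0 → I t ω ≤ σ^2 * p * t * (X ω) ^ (p - 1)) ∧
        (∀ j : ℕ, i t ω = j + 1 → I t ω ≤ σ^2 * ((j:ℝ) + 2) * t ^ p) := by
      filter_upwards [hτ, hi t ht0] with ω hω hiω
      obtain ⟨hmono, hτ0, hτ1⟩ := hω
      have key := aux_pointwise (f := fun z => τ z ω) (t := t) (σ := σ) (p := p)
        (i t ω) hmono hτ0 hτ1 hiω.1 ht0 hp0 hp1 hσ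
      rw [hIdef t ht0 ω]
      exact ⟨by simp only [hXdef]; linarith, key.1, key.2.1, key.2.2⟩
    set s0 : Set Ω := {ω | i t ω = 0} with hs0def
    have hs0 : MeasurableSet s0 := (himeas t) (measurableSet_singleton 0)
    rw [← lintegral_add_compl (fun ω => ENNReal.ofReal ((I t ω) ^ δ)) hs0]
    have part1 : ∫⁻ ω in s0, ENNReal.ofReal ((I t ω) ^ δ) ∂μ ≤ ENNReal.ofReal (C1 * t ^ δ) := by
      have hptw : ∀ᵐ ω ∂(μ.restrict s0), ENNReal.ofReal ((I t ω)^δ)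
          ≤ ENNReal.ofReal ((σ^2*p*t)^δ) * ENNReal.ofReal (X ω ^ (-b)) := by
        filter_upwards [ae_restrict_of_ae hae, ae_restrict_mem hs0] with ω hω hmem
        obtain ⟨hXω, hI0, h0, _⟩ := hω
        have hIB := h0 hmem
        have hBeq : (σ^2*p*t * X ω ^ (p-1)) ^ δ = (σ^2*p*t)^δ * X ω ^ (-b) := by
          rw [Real.mul_rpow (by positivity) (Real.rpow_nonneg hXω.le _),
            ← Real.rpow_mul hXω.le]
          congr 1
          rw [hbdef]; ring
        rw [← ENNReal.ofReal_mul (by positivity), ← hBeq]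
        exact ENNReal.ofReal_le_ofReal (Real.rpow_le_rpow hI0 hIB hδ0.le)
      calc ∫⁻ ω in s0, ENNReal.ofReal ((I t ω)^δ) ∂μ
          ≤ ∫⁻ ω in s0, ENNReal.ofReal ((σ^2*p*t)^δ) * ENNReal.ofReal (X ω ^ (-b)) ∂μ :=
            lintegral_mono_ae hptw
        _ ≤ ∫⁻ ω, ENNReal.ofReal ((σ^2*p*t)^δ) * ENNReal.ofReal (X ω ^ (-b)) ∂μ :=
            setLIntegral_le_lintegral _ _
        _ = ENNReal.ofReal ((σ^2*p*t)^δ) * K :=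
            lintegral_const_mul' _ _ ENNReal.ofReal_ne_top
        _ ≤ ENNReal.ofReal (C1 * t ^ δ) := by
            rw [← ENNReal.ofReal_toReal hK.ne, ← ENNReal.ofReal_mul (by positivity)]
            apply ENNReal.ofReal_le_ofReal
            rw [hC1def, Real.mul_rpow (by positivity) ht0.le]
            exact le_of_eq (by ring)
    have part2 : ∫⁻ ω in s0ᶜ, ENNReal.ofReal ((I t ω) ^ δ) ∂μ ≤ ENNReal.ofReal (C2 * t ^ δ) := by
      have hsetc : s0ᶜ = ⋃ k : ℕ, {ω | i t ω = k + 1} := by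
        ext ω
        simp only [mem_compl_iff, hs0def, mem_setOf_eq, mem_iUnion]
        constructor
        · intro h; exact ⟨i t ω - 1, by omega⟩
        · rintro ⟨k, hk⟩; omega
      have hpiece : ∀ k : ℕ, ∫⁻ ω in {ω | i t ω = k + 1}, ENNReal.ofReal ((I t ω)^δ) ∂μ
          ≤ ENNReal.ofReal ((σ^2)^δ * t^(p*δ) * (lam * t) * q k) := by
        intro k
        have hmeask : MeasurableSet {ω | i t ω = k+1} :=
          (himeas t) (measurableSet_singleton (k+1))
        have hptw : ∀ᵐ ω ∂(μ.restrict {ω | i t ω = k+1}),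
            ENNReal.ofReal ((I t ω)^δ)
              ≤ ENNReal.ofReal ((σ^2)^δ * ((k:ℝ)+2)^m * t^(p*δ)) := by
          filter_upwards [ae_restrict_of_ae hae, ae_restrict_mem hmeask] with ω hω hmem
          obtain ⟨hXω, hI0, _, h1⟩ := hω
          have hIB := h1 k hmem
          apply ENNReal.ofReal_le_ofReal
          calc (I t ω)^δ ≤ (σ^2 * ((k:ℝ)+2) * t^p)^δ := Real.rpow_le_rpow hI0 hIB hδ0.le
            _ = (σ^2)^δ * ((k:ℝ)+2)^δ * (t^p)^δ := by
                rw [Real.mul_rpow (by positivity) (Real.rpow_nonneg ht0.le _),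
                    Real.mul_rpow (by positivity) (by positivity)]
            _ ≤ (σ^2)^δ * ((k:ℝ)+2)^m * t^(p*δ) := by
                rw [← Real.rpow_mul ht0.le]
                have h2 : ((k:ℝ)+2)^δ ≤ ((k:ℝ)+2)^(m:ℝ) :=
                  Real.rpow_le_rpow_of_exponent_le
                    (by have : (0:ℝ) ≤ (k:ℝ) := Nat.cast_nonneg k; linarith) hδm
                rw [Real.rpow_natCast] at h2
                have hσδ : (0:ℝ) ≤ (σ^2)^δ := Real.rpow_nonneg (by positivity) δ
                have htpδ : (0:ℝ) ≤ t^(p*δ) := Real.rpow_nonneg ht0.le _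
                exact mul_le_mul_of_nonneg_right
                  (mul_le_mul_of_nonneg_left h2 hσδ) htpδ
        calc ∫⁻ ω in {ω | i t ω = k+1}, ENNReal.ofReal ((I t ω)^δ) ∂μ
            ≤ ∫⁻ _ in {ω | i t ω = k+1},
                ENNReal.ofReal ((σ^2)^δ * ((k:ℝ)+2)^m * t^(p*δ)) ∂μ :=
              lintegral_mono_ae hptw
          _ = ENNReal.ofReal ((σ^2)^δ * ((k:ℝ)+2)^m * t^(p*δ)) * μ {ω | i t ω = k+1} := by
              rw [setLIntegral_const]
          _ ≤ ENNReal.ofReal ((σ^2)^δ * t^(p*δ) * (lam * t) * q k) := by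
              rw [hpois t ⟨ht0, ht1⟩ (k+1), ← ENNReal.ofReal_mul (by positivity)]
              apply ENNReal.ofReal_le_ofReal
              have hap := aux_poisson m k hlam ht0 ht1
              have hnn : (0:ℝ) ≤ (σ^2)^δ * t^(p*δ) := by positivity
              calc (σ^2)^δ * ((k:ℝ)+2)^m * t^(p*δ)
                    * (Real.exp (-lam*t) * (lam*t)^(k+1) / (k+1).factorial)
                  = ((σ^2)^δ * t^(p*δ))
                    * (((k:ℝ)+2)^m * (Real.exp (-lam*t) * (lam*t)^(k+1) / (k+1).factorial)) := by
                    ring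
                _ ≤ ((σ^2)^δ * t^(p*δ))
                    * (lam * t * ((2:ℝ)^m * ((2^m*lam)^k / k.factorial))) :=
                    mul_le_mul_of_nonneg_left hap hnn
                _ = (σ^2)^δ * t^(p*δ) * (lam * t) * q k := by simp only [hqdef]; ring
      calc ∫⁻ ω in s0ᶜ, ENNReal.ofReal ((I t ω)^δ) ∂μ
          = ∫⁻ ω in ⋃ k : ℕ, {ω | i t ω = k + 1}, ENNReal.ofReal ((I t ω)^δ) ∂μ := by
            rw [hsetc]
        _ ≤ ∑' k : ℕ, ∫⁻ ω in {ω | i t ω = k + 1}, ENNReal.ofReal ((I t ω)^δ) ∂μ :=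
            lintegral_iUnion_le _ _
        _ ≤ ∑' k : ℕ, ENNReal.ofReal ((σ^2)^δ * t^(p*δ) * (lam * t) * q k) :=
            ENNReal.tsum_le_tsum hpiece
        _ = ∑' k : ℕ, ENNReal.ofReal ((σ^2)^δ * t^(p*δ) * (lam * t)) * ENNReal.ofReal (q k) := by
            refine tsum_congr fun k => ?_
            rw [← ENNReal.ofReal_mul (by positivity)]
        _ = ENNReal.ofReal ((σ^2)^δ * t^(p*δ) * (lam * t)) * ENNReal.ofReal S := by
            rw [ENNReal.tsum_mul_left, hSdef,
              ENNReal.ofReal_tsum_of_nonneg hq_nonneg hq_summable]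
        _ ≤ ENNReal.ofReal (C2 * t ^ δ) := by
            rw [← ENNReal.ofReal_mul (by positivity)]
            apply ENNReal.ofReal_le_ofReal
            have htsplit : t^(p*δ) * t = t^(p*δ+1) := by
              rw [Real.rpow_add ht0, Real.rpow_one]
            have htle : t^(p*δ+1) ≤ t^δ := by
              apply Real.rpow_le_rpow_of_exponent_ge ht0 ht1
              nlinarith
            have hCS : (0:ℝ) ≤ (σ^2)^δ * lam * S :=
              mul_nonneg (mul_nonneg (Real.rpow_nonneg (by positivity) δ) hlam.le) hS0
            rw [hC2def]
            calc (σ^2)^δ * t^(p*δ) * (lam * t) * S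
                = ((σ^2)^δ * lam * S) * (t^(p*δ) * t) := by ring
              _ = ((σ^2)^δ * lam * S) * t^(p*δ+1) := by rw [htsplit]
              _ ≤ ((σ^2)^δ * lam * S) * t^δ := mul_le_mul_of_nonneg_left htle hCS
              _ = (σ^2)^δ * lam * S * t^δ := by ring
    calc ∫⁻ ω in s0, ENNReal.ofReal ((I t ω) ^ δ) ∂μ
          + ∫⁻ ω in s0ᶜ, ENNReal.ofReal ((I t ω) ^ δ) ∂μ
        ≤ ENNReal.ofReal (C1 * t ^ δ) + ENNReal.ofReal (C2 * t ^ δ) := add_le_add part1 part2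
      _ = ENNReal.ofReal ((C1 + C2) * t ^ δ) := by
          rw [← ENNReal.ofReal_add (by positivity) (by positivity)]
          congr 1
          ring
  refine ⟨⟨C1 + C2, main⟩, ⟨C1 + C2, ?_⟩⟩
  rintro t ⟨ht0, ht1⟩
  have htδ : 0 < t ^ δ := Real.rpow_pos_of_pos ht0 _
  have hIpos : ∀ᵐ ω ∂μ, 0 ≤ I t ω := by
    filter_upwards [hτ, hi t ht0] with ω hω hiω
    obtain ⟨hmono, hτ0, hτ1⟩ := hω
    have key := aux_pointwise (f := fun z => τ z ω) (t := t) (σ := σ) (p := p)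
      (i t ω) hmono hτ0 hτ1 hiω.1 ht0 hp0 hp1 hσ
    rw [hIdef t ht0 ω]; exact key.1
  have hcongr : ∫⁻ ω, ENNReal.ofReal ((I t ω / t) ^ δ) ∂μ
      = ∫⁻ ω, ENNReal.ofReal ((I t ω) ^ δ) * (ENNReal.ofReal (t ^ δ))⁻¹ ∂μ := by
    apply lintegral_congr_ae
    filter_upwards [hIpos] with ω hω
    rw [Real.div_rpow hω ht0.le, ENNReal.ofReal_div_of_pos htδ, div_eq_mul_inv]
  rw [hcongr, lintegral_mul_const' _ _ (by simp [ENNReal.inv_ne_top, htδ])]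
  calc (∫⁻ ω, ENNReal.ofReal ((I t ω) ^ δ) ∂μ) * (ENNReal.ofReal (t ^ δ))⁻¹
      ≤ ENNReal.ofReal ((C1 + C2) * t ^ δ) * (ENNReal.ofReal (t ^ δ))⁻¹ := by
        exact mul_le_mul_left (main t ⟨ht0, ht1⟩) _
    _ = ENNReal.ofReal (C1 + C2) * (ENNReal.ofReal (t ^ δ) * (ENNReal.ofReal (t ^ δ))⁻¹) := by
        rw [ENNReal.ofReal_mul (by positivity), mul_assoc]
    _ = ENNReal.ofReal (C1 + C2) := by
        rw [ENNReal.mul_inv_cancel (by simp [htδ]) ENNReal.ofReal_ne_top, mul_one]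
end

section
/- Let N₁, N₂ be standard Gaussian random variables and let A, B be nonnegative integrable random variables on the same probability space, such that N₁, N₂ and the pair (A, B) are mutually independent. Then |N₁|·√A, |N₂|·√B, and their product are integrable, and Cov(|N₁|·√A, |N₂|·√B) = (2/π)·Cov(√A, √B). -/
open MeasureTheory ProbabilityTheory
open scoped Real

section CovAbsGaussianAux
open Real Filter Set

lemma aux_ioi : ∫ x in Set.Ioi (0:ℝ), x * Real.exp (-x^2/2) = 1 := by
  have hderiv : ∀ x ∈ Set.Ioi (0:ℝ),
      HasDerivAt (fun y : ℝ => -Real.exp (-y^2/2)) (x * Real.exp (-x^2/2)) x := by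
    intro x _
    have h : HasDerivAt (fun y : ℝ => -y^2/2) (-x) x := by
      have h1 := ((hasDerivAt_pow 2 x).neg).div_const 2
      refine h1.congr_deriv ?_
      push_cast; ring
    have h2 := (h.exp).neg
    refine h2.congr_deriv ?_
    ring
  have hint : IntegrableOn (fun x : ℝ => x * Real.exp (-x^2/2)) (Set.Ioi 0) := by
    have h1 : Integrable (fun x : ℝ => x * Real.exp (-(1/2) * x^2)) :=
      integrable_mul_exp_neg_mul_sq (by norm_num)
    have h2 : (fun x : ℝ => x * Real.exp (-x^2/2))
        = fun x : ℝ => x * Real.exp (-(1/2) * x^2) := by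
      funext x; ring_nf
    rw [h2]; exact h1.integrableOn
  have htend : Tendsto (fun y : ℝ => -Real.exp (-y^2/2)) atTop (nhds 0) := by
    rw [show (0:ℝ) = -0 by ring]
    refine Tendsto.neg ?_
    refine Real.tendsto_exp_atBot.comp ?_
    have h3 : Tendsto (fun y : ℝ => y^2/2) atTop atTop :=
      (tendsto_pow_atTop two_ne_zero).atTop_div_const (by norm_num)
    have h4 := tendsto_neg_atTop_atBot.comp h3
    have h5 : (fun y : ℝ => -y^2/2) = (Neg.neg ∘ fun y : ℝ => y^2/2) := by
      funext y; simp [neg_div]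
    rw [h5]; exact h4
  have hcont : ContinuousWithinAt (fun y : ℝ => -Real.exp (-y^2/2)) (Set.Ici 0) 0 := by
    exact (((continuous_pow 2).neg.div_const 2).rexp.neg).continuousWithinAt
  have := integral_Ioi_of_hasDerivAt_of_tendsto hcont hderiv hint htend
  simpa using this

lemma aux_pdf_eq (x : ℝ) :
    gaussianPDFReal 0 1 x = (Real.sqrt (2 * π))⁻¹ * Real.exp (-x^2/2) := by
  simp [gaussianPDFReal]

lemma aux_gauss_meas :
    gaussianReal 0 1
      = volume.withDensity (fun x => ((gaussianPDFReal 0 1 x).toNNReal : ENNReal)) := by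
  rw [gaussianReal_of_var_ne_zero _ one_ne_zero]
  rfl

lemma aux_abs_pdf_int :
    Integrable (fun x : ℝ => gaussianPDFReal 0 1 x * |x|) := by
  have h1 : Integrable (fun x : ℝ => x * Real.exp (-(1/2) * x^2)) :=
    integrable_mul_exp_neg_mul_sq (by norm_num)
  have h2 := (h1.abs.const_mul (Real.sqrt (2 * π))⁻¹)
  refine h2.congr ?_
  filter_upwards with x
  rw [aux_pdf_eq]
  rw [abs_mul, abs_of_nonneg (Real.exp_pos _).le]
  rw [show -(1/2 : ℝ) * x^2 = -x^2/2 by ring]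
  ring

lemma aux_abs_integrable : Integrable (fun x : ℝ => |x|) (gaussianReal 0 1) := by
  rw [aux_gauss_meas,
    integrable_withDensity_iff_integrable_smul
      ((measurable_gaussianPDFReal 0 1).real_toNNReal)]
  refine aux_abs_pdf_int.congr ?_
  filter_upwards with x
  rw [NNReal.smul_def, Real.coe_toNNReal _ (gaussianPDFReal_nonneg 0 1 x), smul_eq_mul]

lemma aux_abs_moment : ∫ x, |x| ∂(gaussianReal 0 1) = Real.sqrt (2 / π) := by
  rw [aux_gauss_meas,
    integral_withDensity_eq_integral_smul
      ((measurable_gaussianPDFReal 0 1).real_toNNReal)]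
  have h1 : ∀ x : ℝ, ((gaussianPDFReal 0 1 x).toNNReal : ℝ) • |x|
      = (Real.sqrt (2 * π))⁻¹ * (|x| * Real.exp (-x^2/2)) := by
    intro x
    rw [smul_eq_mul, Real.coe_toNNReal _ (gaussianPDFReal_nonneg 0 1 x), aux_pdf_eq]
    ring
  simp_rw [NNReal.smul_def]
  have heq : (fun x => ((gaussianPDFReal 0 1 x).toNNReal : ℝ) • |x|)
      = fun x => (Real.sqrt (2 * π))⁻¹ * (|x| * Real.exp (-x^2/2)) := funext h1
  rw [heq]
  rw [integral_const_mul]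
  have h2 : ∫ x : ℝ, |x| * Real.exp (-x^2/2) = 2 := by
    have h3 := integral_comp_abs (f := fun t : ℝ => t * Real.exp (-t^2/2))
    simp_rw [sq_abs] at h3
    rw [h3, aux_ioi, mul_one]
  rw [h2]
  have hπ : (0:ℝ) < π := Real.pi_pos
  have h2π : (0:ℝ) < Real.sqrt (2 * π) := Real.sqrt_pos.mpr (by positivity)
  have h4 : Real.sqrt (2 / π) * Real.sqrt (2 * π) = 2 := by
    rw [← Real.sqrt_mul (by positivity)]
    rw [show (2 / π) * (2 * π) = 2^2 by field_simp]
    exact Real.sqrt_sq (by norm_num)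
  rw [inv_mul_eq_div, eq_comm, Real.sqrt_eq_iff_eq_sq] <;> try positivity
  rw [div_pow, Real.sq_sqrt (by positivity : (0:ℝ) ≤ 2*π)]
  field_simp

end CovAbsGaussianAux

/-- Let `N₁, N₂` be standard Gaussians and `A, B` nonnegative
integrable random variables, with `N₁`, `N₂` and the pair `(A, B)` mutually independent
(equivalently: `N₁ ⟂ N₂` and `(N₁, N₂) ⟂ (A, B)`). Then `|N₁|√A`, `|N₂|√B` and their
product are integrable, and `Cov(|N₁|√A, |N₂|√B) = (2/π)·Cov(√A, √B)`. -/
theorem cov_abs_gaussian_sqrt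
    {Ω : Type*} [MeasurableSpace Ω] (μ : Measure Ω) [IsProbabilityMeasure μ]
    (N₁ N₂ A B : Ω → ℝ)
    (hN₁m : Measurable N₁) (hN₂m : Measurable N₂)
    (hAm : Measurable A) (hBm : Measurable B)
    (hN₁d : μ.map N₁ = gaussianReal 0 1) (hN₂d : μ.map N₂ = gaussianReal 0 1)
    (hA0 : ∀ ω, 0 ≤ A ω) (hB0 : ∀ ω, 0 ≤ B ω)
    (hAint : Integrable A μ) (hBint : Integrable B μ)
    (hNindep : IndepFun N₁ N₂ μ)
    (hindep : IndepFun (fun ω => (N₁ ω, N₂ ω)) (fun ω => (A ω, B ω)) μ) :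
    Integrable (fun ω => |N₁ ω| * Real.sqrt (A ω)) μ ∧
    Integrable (fun ω => |N₂ ω| * Real.sqrt (B ω)) μ ∧
    Integrable (fun ω => (|N₁ ω| * Real.sqrt (A ω)) * (|N₂ ω| * Real.sqrt (B ω))) μ ∧
    (∫ ω, (|N₁ ω| * Real.sqrt (A ω)) * (|N₂ ω| * Real.sqrt (B ω)) ∂μ)
        - (∫ ω, |N₁ ω| * Real.sqrt (A ω) ∂μ) * (∫ ω, |N₂ ω| * Real.sqrt (B ω) ∂μ)
      = (2 / Real.pi) * ((∫ ω, Real.sqrt (A ω) * Real.sqrt (B ω) ∂μ)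
          - (∫ ω, Real.sqrt (A ω) ∂μ) * (∫ ω, Real.sqrt (B ω) ∂μ)) := by
  have hsqrtm : Measurable fun a : ℝ => Real.sqrt a := Real.continuous_sqrt.measurable
  -- integrability of |N₁|, |N₂|
  have hN₁abs : Integrable (fun ω => |N₁ ω|) μ := by
    have h := (integrable_map_measure measurable_abs.aestronglyMeasurable
      hN₁m.aemeasurable).mp (hN₁d ▸ aux_abs_integrable)
    exact h
  have hN₂abs : Integrable (fun ω => |N₂ ω|) μ := by
    have h := (integrable_map_measure measurable_abs.aestronglyMeasurable
      hN₂m.aemeasurable).mp (hN₂d ▸ aux_abs_integrable)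
    exact h
  -- moments of |N₁|, |N₂|
  have hE₁ : ∫ ω, |N₁ ω| ∂μ = Real.sqrt (2 / π) := by
    have h := integral_map (μ := μ) (f := fun x : ℝ => |x|) hN₁m.aemeasurable
      measurable_abs.aestronglyMeasurable
    rw [hN₁d, aux_abs_moment] at h
    exact h.symm
  have hE₂ : ∫ ω, |N₂ ω| ∂μ = Real.sqrt (2 / π) := by
    have h := integral_map (μ := μ) (f := fun x : ℝ => |x|) hN₂m.aemeasurable
      measurable_abs.aestronglyMeasurable
    rw [hN₂d, aux_abs_moment] at h
    exact h.symm
  -- integrability of √A, √B, √A√B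
  have sqrt_le : ∀ x : ℝ, 0 ≤ x → Real.sqrt x ≤ 1 + x := by
    intro x hx
    have h := Real.sqrt_le_sqrt (show x ≤ (1 + x)^2 by nlinarith)
    rwa [Real.sqrt_sq (by linarith)] at h
  have hsA : Integrable (fun ω => Real.sqrt (A ω)) μ := by
    refine Integrable.mono' ((integrable_const (1:ℝ)).add hAint)
      (hsqrtm.comp hAm).aestronglyMeasurable ?_
    filter_upwards with ω
    rw [Real.norm_of_nonneg (Real.sqrt_nonneg _)]
    exact sqrt_le _ (hA0 ω)
  have hsB : Integrable (fun ω => Real.sqrt (B ω)) μ := by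
    refine Integrable.mono' ((integrable_const (1:ℝ)).add hBint)
      (hsqrtm.comp hBm).aestronglyMeasurable ?_
    filter_upwards with ω
    rw [Real.norm_of_nonneg (Real.sqrt_nonneg _)]
    exact sqrt_le _ (hB0 ω)
  have hsAB : Integrable (fun ω => Real.sqrt (A ω) * Real.sqrt (B ω)) μ := by
    refine Integrable.mono' (hAint.add hBint)
      ((hsqrtm.comp hAm).mul (hsqrtm.comp hBm)).aestronglyMeasurable ?_
    filter_upwards with ω
    simp only [Pi.add_apply]
    rw [Real.norm_of_nonneg (mul_nonneg (Real.sqrt_nonneg _) (Real.sqrt_nonneg _))]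
    have h1 := Real.sq_sqrt (hA0 ω)
    have h2 := Real.sq_sqrt (hB0 ω)
    nlinarith [sq_nonneg (Real.sqrt (A ω) - Real.sqrt (B ω)), Real.sqrt_nonneg (A ω),
      Real.sqrt_nonneg (B ω)]
  -- independence facts
  have i1 : IndepFun (fun ω => |N₁ ω|) (fun ω => Real.sqrt (A ω)) μ :=
    hindep.comp (measurable_abs.comp measurable_fst) (hsqrtm.comp measurable_fst)
  have i2 : IndepFun (fun ω => |N₂ ω|) (fun ω => Real.sqrt (B ω)) μ :=
    hindep.comp (measurable_abs.comp measurable_snd) (hsqrtm.comp measurable_snd)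
  have i3 : IndepFun (fun ω => |N₁ ω| * |N₂ ω|)
      (fun ω => Real.sqrt (A ω) * Real.sqrt (B ω)) μ :=
    hindep.comp ((measurable_abs.comp measurable_fst).mul (measurable_abs.comp measurable_snd))
      ((hsqrtm.comp measurable_fst).mul (hsqrtm.comp measurable_snd))
  have i4 : IndepFun (fun ω => |N₁ ω|) (fun ω => |N₂ ω|) μ :=
    hNindep.comp measurable_abs measurable_abs
  -- product integrabilities
  have P1 : Integrable (fun ω => |N₁ ω| * Real.sqrt (A ω)) μ := i1.integrable_mul hN₁abs hsA
  have P2 : Integrable (fun ω => |N₂ ω| * Real.sqrt (B ω)) μ := i2.integrable_mul hN₂abs hsB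
  have hNN : Integrable (fun ω => |N₁ ω| * |N₂ ω|) μ := i4.integrable_mul hN₁abs hN₂abs
  have hre : (fun ω => (|N₁ ω| * Real.sqrt (A ω)) * (|N₂ ω| * Real.sqrt (B ω)))
      = fun ω => (|N₁ ω| * |N₂ ω|) * (Real.sqrt (A ω) * Real.sqrt (B ω)) := by
    funext ω; ring
  have P3 : Integrable (fun ω => (|N₁ ω| * Real.sqrt (A ω)) * (|N₂ ω| * Real.sqrt (B ω))) μ := by
    rw [hre]; exact i3.integrable_mul hNN hsAB
  refine ⟨P1, P2, P3, ?_⟩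
  -- integral identities
  have hs2 : Real.sqrt (2 / π) * Real.sqrt (2 / π) = 2 / π :=
    Real.mul_self_sqrt (by positivity)
  have e1 : ∫ ω, |N₁ ω| * Real.sqrt (A ω) ∂μ
      = Real.sqrt (2 / π) * ∫ ω, Real.sqrt (A ω) ∂μ := by
    have h := i1.integral_mul_eq_mul_integral hN₁abs.aestronglyMeasurable hsA.aestronglyMeasurable
    rw [← hE₁]; exact h
  have e2 : ∫ ω, |N₂ ω| * Real.sqrt (B ω) ∂μ
      = Real.sqrt (2 / π) * ∫ ω, Real.sqrt (B ω) ∂μ := by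
    have h := i2.integral_mul_eq_mul_integral hN₂abs.aestronglyMeasurable hsB.aestronglyMeasurable
    rw [← hE₂]; exact h
  have e4 : ∫ ω, |N₁ ω| * |N₂ ω| ∂μ = 2 / π := by
    have h := i4.integral_mul_eq_mul_integral hN₁abs.aestronglyMeasurable hN₂abs.aestronglyMeasurable
    rw [show (fun ω => |N₁ ω|) * (fun ω => |N₂ ω|) = fun ω => |N₁ ω| * |N₂ ω| from rfl] at h
    rw [h, hE₁, hE₂, hs2]
  have e3 : ∫ ω, (|N₁ ω| * Real.sqrt (A ω)) * (|N₂ ω| * Real.sqrt (B ω)) ∂μ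
      = (2 / π) * ∫ ω, Real.sqrt (A ω) * Real.sqrt (B ω) ∂μ := by
    rw [hre]
    have h := i3.integral_mul_eq_mul_integral hNN.aestronglyMeasurable hsAB.aestronglyMeasurable
    rw [show ((fun ω => |N₁ ω| * |N₂ ω|) * fun ω => Real.sqrt (A ω) * Real.sqrt (B ω))
      = fun ω => (|N₁ ω| * |N₂ ω|) * (Real.sqrt (A ω) * Real.sqrt (B ω)) from rfl] at h
    rw [h, e4]
  rw [e1, e2, e3]
  linear_combination (-(∫ ω, Real.sqrt (A ω) ∂μ) * (∫ ω, Real.sqrt (B ω) ∂μ)) * hs2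
end

section
/- For q ∈ [0, ∞), the integral ∫_ℝ |x|^q f(x) dx is finite if and only if q < (1/2 − D)^{−1}. -/
open MeasureTheory

section Aux

open Set Real intervalIntegral
open scoped ENNReal

lemma aux_gauss_integrable {b q : ℝ} (hb : 0 < b) (hq : 0 ≤ q) :
    Integrable (fun x : ℝ => |x| ^ q * Real.exp (-b * x ^ 2)) := by
  have hq' : (-1 : ℝ) < q := by linarith
  rw [← integrableOn_univ, ← @Iio_union_Ici _ _ (0 : ℝ), integrableOn_union,
    integrableOn_Ici_iff_integrableOn_Ioi]
  have hIoi : IntegrableOn (fun x : ℝ => |x| ^ q * Real.exp (-b * x ^ 2)) (Ioi 0) :=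
    (integrableOn_rpow_mul_exp_neg_mul_sq hb hq').congr_fun
      (fun x hx => by rw [abs_of_pos hx]) measurableSet_Ioi
  refine ⟨?_, hIoi⟩
  rw [← (Measure.measurePreserving_neg (volume : Measure ℝ)).integrableOn_comp_preimage
      (Homeomorph.neg ℝ).measurableEmbedding]
  simp only [Function.comp_def, neg_sq, neg_preimage, neg_Iio, neg_neg, neg_zero, abs_neg]
  exact hIoi

lemma aux_gauss_value {b q : ℝ} (hb : 0 < b) :
    ∫ x : ℝ, |x| ^ q * Real.exp (-b * x ^ 2)
      = b ^ (-(q + 1) / 2) * ∫ x : ℝ, |x| ^ q * Real.exp (-1 * x ^ 2) := by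
  have hsb : 0 < Real.sqrt b := Real.sqrt_pos.2 hb
  have h := Measure.integral_comp_mul_left
    (fun u : ℝ => |u| ^ q * Real.exp (-1 * u ^ 2)) (Real.sqrt b)
  simp only [smul_eq_mul] at h
  have heq : ∀ x : ℝ, |Real.sqrt b * x| ^ q * Real.exp (-1 * (Real.sqrt b * x) ^ 2)
      = Real.sqrt b ^ q * (|x| ^ q * Real.exp (-b * x ^ 2)) := by
    intro x
    rw [abs_mul, abs_of_pos hsb, Real.mul_rpow hsb.le (abs_nonneg x), mul_pow,
      Real.sq_sqrt hb.le]
    ring_nf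
  simp_rw [heq, MeasureTheory.integral_const_mul] at h
  have hpow : Real.sqrt b ^ q ≠ 0 := by positivity
  have h2 : (∫ x : ℝ, |x| ^ q * Real.exp (-b * x ^ 2))
      = (Real.sqrt b ^ q)⁻¹ * (|(Real.sqrt b)⁻¹| * ∫ x : ℝ, |x| ^ q * Real.exp (-1 * x ^ 2)) := by
    field_simp at h ⊢
    linarith [h]
  rw [h2, abs_of_pos (inv_pos.2 hsb)]
  rw [Real.sqrt_eq_rpow, ← Real.rpow_mul hb.le, ← Real.rpow_neg hb.le, ← Real.rpow_neg hb.le,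
    ← mul_assoc, ← Real.rpow_add hb]
  congr 2
  ring

lemma aux_gauss_pos {q : ℝ}
    (hint : Integrable (fun x : ℝ => |x| ^ q * Real.exp (-1 * x ^ 2))) :
    0 < ∫ x : ℝ, |x| ^ q * Real.exp (-1 * x ^ 2) := by
  rw [integral_pos_iff_support_of_nonneg (fun x => by positivity) hint]
  have hsub : Set.Ioi (0:ℝ) ⊆ Function.support fun x : ℝ => |x| ^ q * Real.exp (-1 * x ^ 2) := by
    intro x hx
    have : (0:ℝ) < x := hx
    simp only [Function.mem_support]
    positivity
  calc (0:ℝ≥0∞) < volume (Set.Ioi (0:ℝ)) := by simp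
    _ ≤ _ := measure_mono hsub

lemma aux_t_integrable {lam r : ℝ} (hlam : 0 < lam) (hr : -1 < r) :
    IntegrableOn (fun t : ℝ => t ^ r * Real.exp (-lam * t)) (Set.Ioi 0) := by
  have := integrableOn_rpow_mul_exp_neg_mul_rpow (p := 1) hr one_pos hlam
  simpa [Real.rpow_one] using this

lemma aux_exp_rpow_lintegral_finite_iff {lam s : ℝ} (hlam : 0 < lam) :
    (∫⁻ t in Set.Ioi (0:ℝ), ENNReal.ofReal (Real.exp (-lam * t) * t ^ (-s)) ≠ ⊤) ↔ s < 1 := by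
  have hmeas : Measurable fun t : ℝ => Real.exp (-lam * t) * t ^ (-s) := by
    fun_prop
  have hnn : 0 ≤ᵐ[volume.restrict (Set.Ioi (0:ℝ))] fun t : ℝ => Real.exp (-lam * t) * t ^ (-s) := by
    filter_upwards [ae_restrict_mem measurableSet_Ioi] with t ht
    have : (0:ℝ) < t := ht
    positivity
  have hiff : IntegrableOn (fun t : ℝ => Real.exp (-lam * t) * t ^ (-s)) (Set.Ioi 0) ↔
      (∫⁻ t in Set.Ioi (0:ℝ), ENNReal.ofReal (Real.exp (-lam * t) * t ^ (-s)) ≠ ⊤) := by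
    constructor
    · intro h
      exact ((hasFiniteIntegral_iff_ofReal hnn).1 h.2).ne
    · intro h
      exact ⟨hmeas.aestronglyMeasurable.restrict,
        (hasFiniteIntegral_iff_ofReal hnn).2 h.lt_top⟩
  rw [← hiff]
  constructor
  · intro h
    by_contra hs1
    push_neg at hs1
    have h1 : IntegrableOn (fun t : ℝ => t ^ (-s)) (Set.Ioo (0:ℝ) 1) := by
      have hmono : IntegrableOn (fun t : ℝ => Real.exp (-lam * t) * t ^ (-s)) (Set.Ioo 0 1) :=
        h.mono_set Set.Ioo_subset_Ioi_self
      refine (hmono.const_mul (Real.exp lam)).mono' ?_ ?_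
      · exact ((by fun_prop : Measurable fun t : ℝ => t ^ (-s)).aestronglyMeasurable).restrict
      · filter_upwards [ae_restrict_mem measurableSet_Ioo] with t ht
        have ht0 : (0:ℝ) < t := ht.1
        have ht1 : t < 1 := ht.2
        rw [Real.norm_eq_abs, abs_of_nonneg (Real.rpow_nonneg ht0.le _)]
        have hexp : Real.exp (-lam) ≤ Real.exp (-lam * t) := by
          apply Real.exp_le_exp.2; nlinarith
        calc t ^ (-s) = Real.exp lam * (Real.exp (-lam) * t ^ (-s)) := by
              rw [← mul_assoc, ← Real.exp_add]; simp
          _ ≤ Real.exp lam * (Real.exp (-lam * t) * t ^ (-s)) := by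
              apply mul_le_mul_of_nonneg_left _ (Real.exp_pos _).le
              exact mul_le_mul_of_nonneg_right hexp (Real.rpow_nonneg ht0.le _)
    rw [integrableOn_Ioo_rpow_iff one_pos] at h1
    linarith
  · intro hs1
    have := integrableOn_rpow_mul_exp_neg_mul_rpow (show (-1:ℝ) < -s by linarith) (p := 1) one_pos hlam
    simp only [Real.rpow_one] at this
    exact this.congr_fun (fun t ht => by ring) measurableSet_Ioi

end Aux

/-- For the mixture-of-Gaussians density
`f(x) = ∫_0^∞ λe^{−λt}·t^{1/2−D}/(σ√(4Dπ))·exp(−t^{1−2D}x²/(4Dσ²)) dt`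
and `q ∈ [0,∞)`, the integral `∫_ℝ |x|^q f(x) dx` is finite iff `q < (1/2 − D)⁻¹`. -/
theorem scaling_density_moment_finite_iff
    (D lam σ : ℝ) (hD : D ∈ Set.Ioo (0 : ℝ) (1/2)) (hlam : 0 < lam) (hσ : 0 < σ)
    (f : ℝ → ℝ)
    (hf : ∀ x : ℝ, f x = ∫ t in Set.Ioi (0 : ℝ),
      lam * Real.exp (-lam * t) * (t ^ (1/2 - D) / (σ * Real.sqrt (4*D*Real.pi)))
        * Real.exp (-(t ^ (1 - 2*D) * x^2) / (4*D*σ^2)))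
    (q : ℝ) (hq : 0 ≤ q) :
    Integrable (fun x : ℝ => |x| ^ q * f x) ↔ q < (1/2 - D)⁻¹ := by
  obtain ⟨hD0, hD12⟩ := hD
  have hπ := Real.pi_pos
  have hc : 0 < σ * Real.sqrt (4*D*Real.pi) := by positivity
  set c := σ * Real.sqrt (4*D*Real.pi) with hcdef
  have h12 : 0 < 1/2 - D := by linarith
  have h2D : 0 < 1 - 2*D := by linarith
  have hb4 : (0:ℝ) < 4*D*σ^2 := by positivity
  set s := (1/2 - D) * q with hsdef
  have hs0 : 0 ≤ s := mul_nonneg h12.le hq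
  set M := ∫ x : ℝ, |x| ^ q * Real.exp (-1 * x ^ 2) with hMdef
  have hMint : Integrable (fun x : ℝ => |x| ^ q * Real.exp (-1 * x ^ 2)) :=
    aux_gauss_integrable one_pos hq
  have hMpos : 0 < M := aux_gauss_pos hMint
  set k : ℝ → ℝ → ℝ := fun x t => lam * Real.exp (-lam * t) * (t ^ (1/2 - D) / c)
      * Real.exp (-(t ^ (1 - 2*D) * x^2) / (4*D*σ^2)) with hkdef
  have hfk : ∀ x : ℝ, f x = ∫ t in Set.Ioi (0:ℝ), k x t := hf
  have hk_nn : ∀ x t : ℝ, 0 < t → 0 ≤ k x t := by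
    intro x t ht
    simp only [hkdef]
    positivity
  have hf_nn : ∀ x, 0 ≤ f x := fun x => by
    rw [hfk x]
    exact setIntegral_nonneg measurableSet_Ioi (fun t ht => hk_nn x t ht)
  have hkt_int : ∀ x : ℝ, IntegrableOn (fun t => k x t) (Set.Ioi 0) := by
    intro x
    have hdom := (aux_t_integrable hlam (show (-1:ℝ) < 1/2 - D by linarith)).const_mul (lam / c)
    refine hdom.mono' ?_ ?_
    · exact ((by simp only [hkdef]; fun_prop : Measurable fun t : ℝ => k x t)).aestronglyMeasurable.restrict
    · filter_upwards [ae_restrict_mem measurableSet_Ioi] with t ht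
      have ht0 : (0:ℝ) < t := ht
      rw [Real.norm_eq_abs, abs_of_nonneg (hk_nn x t ht0)]
      have h1 : Real.exp (-(t ^ (1 - 2*D) * x^2) / (4*D*σ^2)) ≤ 1 := by
        rw [Real.exp_le_one_iff]
        apply div_nonpos_of_nonpos_of_nonneg _ hb4.le
        have : 0 ≤ t ^ (1 - 2*D) * x^2 := by positivity
        linarith
      calc k x t ≤ lam * Real.exp (-lam * t) * (t ^ (1/2 - D) / c) := by
            simp only [hkdef]
            exact mul_le_of_le_one_right (by positivity) h1
        _ = lam / c * (t ^ (1/2 - D) * Real.exp (-lam * t)) := by ring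
  have hx_eq : ∀ x : ℝ, ENNReal.ofReal (|x| ^ q * f x)
      = ∫⁻ t in Set.Ioi 0, ENNReal.ofReal (|x| ^ q * k x t) := by
    intro x
    rw [hfk x, ← MeasureTheory.integral_const_mul]
    refine ofReal_integral_eq_lintegral_ofReal ((hkt_int x).const_mul _) ?_
    filter_upwards [ae_restrict_mem measurableSet_Ioi] with t ht
    exact mul_nonneg (by positivity) (hk_nn x t ht)
  have hCpos : 0 < lam / c * (4*D*σ^2) ^ ((q+1)/2) * M :=
    mul_pos (mul_pos (div_pos hlam hc) (Real.rpow_pos_of_pos hb4 _)) hMpos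
  have hinner : ∀ t ∈ Set.Ioi (0:ℝ),
      (∫⁻ x : ℝ, ENNReal.ofReal (|x| ^ q * k x t))
        = ENNReal.ofReal ((lam / c * (4*D*σ^2) ^ ((q+1)/2) * M)
            * (Real.exp (-lam * t) * t ^ (-s))) := by
    intro t ht
    have ht0 : (0:ℝ) < t := ht
    have ha : 0 < t ^ (1 - 2*D) / (4*D*σ^2) := div_pos (Real.rpow_pos_of_pos ht0 _) hb4
    have hgint := aux_gauss_integrable ha hq
    have hptw : ∀ x : ℝ, |x| ^ q * k x t
        = (lam * Real.exp (-lam * t) * (t ^ (1/2 - D) / c))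
          * (|x| ^ q * Real.exp (-(t ^ (1 - 2*D) / (4*D*σ^2)) * x ^ 2)) := by
      intro x
      simp only [hkdef]
      rw [show -(t ^ (1 - 2*D) / (4*D*σ^2)) * x ^ 2
        = -(t ^ (1 - 2*D) * x^2) / (4*D*σ^2) by ring]
      ring
    simp_rw [hptw]
    rw [← ofReal_integral_eq_lintegral_ofReal (hgint.const_mul _)
      (Filter.Eventually.of_forall (fun x => by positivity))]
    rw [MeasureTheory.integral_const_mul, aux_gauss_value ha, ← hMdef]
    congr 1
    have e1 : ((4*D*σ^2):ℝ) ^ (-(q+1)/2) = ((4*D*σ^2) ^ ((q+1)/2))⁻¹ := by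
      rw [neg_div, Real.rpow_neg hb4.le]
    have e2 : t ^ (1/2 - D) * t ^ ((1 - 2*D) * (-(q+1)/2)) = t ^ (-s) := by
      rw [← Real.rpow_add ht0]
      congr 1
      rw [hsdef]; ring
    rw [Real.div_rpow (Real.rpow_nonneg ht0.le _) hb4.le, ← Real.rpow_mul ht0.le, e1, ← e2]
    field_simp
  have hk_meas : Measurable fun p : ℝ × ℝ => ENNReal.ofReal (|p.1| ^ q * k p.1 p.2) := by
    simp only [hkdef]
    fun_prop
  have hswap : ∫⁻ x : ℝ, ENNReal.ofReal (|x| ^ q * f x)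
      = ∫⁻ t in Set.Ioi 0, ∫⁻ x : ℝ, ENNReal.ofReal (|x| ^ q * k x t) := by
    rw [lintegral_congr hx_eq]
    exact lintegral_lintegral_swap hk_meas.aemeasurable
  have key : ∫⁻ x : ℝ, ENNReal.ofReal (|x| ^ q * f x)
      = ENNReal.ofReal (lam / c * (4*D*σ^2) ^ ((q+1)/2) * M)
        * ∫⁻ t in Set.Ioi 0, ENNReal.ofReal (Real.exp (-lam * t) * t ^ (-s)) := by
    rw [hswap, setLIntegral_congr_fun measurableSet_Ioi hinner]
    simp_rw [ENNReal.ofReal_mul hCpos.le]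
    rw [lintegral_const_mul' _ _ ENNReal.ofReal_ne_top]
  have hf_sm : AEStronglyMeasurable (fun x : ℝ => |x| ^ q * f x) volume := by
    have h1 : StronglyMeasurable (fun x : ℝ => ∫ t in Set.Ioi (0:ℝ), k x t) :=
      StronglyMeasurable.integral_prod_right
        (f := k)
        ((by simp only [hkdef]; fun_prop :
          Measurable (Function.uncurry k))).stronglyMeasurable
    have h2 : (fun x : ℝ => |x| ^ q * f x)
        = fun x => |x| ^ q * ∫ t in Set.Ioi (0:ℝ), k x t := by
      funext x; rw [hfk x]
    rw [h2]
    exact (((by fun_prop : Measurable fun x : ℝ => |x| ^ q)).stronglyMeasurable.mul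
      h1).aestronglyMeasurable
  have hnn : 0 ≤ᵐ[volume] fun x : ℝ => |x| ^ q * f x :=
    Filter.Eventually.of_forall fun x => mul_nonneg (by positivity) (hf_nn x)
  have hiff1 : Integrable (fun x : ℝ => |x| ^ q * f x)
      ↔ (∫⁻ t in Set.Ioi 0, ENNReal.ofReal (Real.exp (-lam * t) * t ^ (-s))) ≠ ⊤ := by
    constructor
    · intro h
      have h2 := (hasFiniteIntegral_iff_ofReal hnn).1 h.2
      rw [key] at h2
      intro htop
      rw [htop, ENNReal.mul_top (ENNReal.ofReal_pos.2 hCpos).ne'] at h2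
      exact lt_irrefl _ h2
    · intro h
      refine ⟨hf_sm, (hasFiniteIntegral_iff_ofReal hnn).2 ?_⟩
      rw [key]
      exact ENNReal.mul_lt_top ENNReal.ofReal_lt_top h.lt_top
  rw [hiff1, aux_exp_rpow_lintegral_finite_iff hlam, hsdef, inv_eq_one_div,
    lt_div_iff₀ h12, mul_comm]
end

section
/- Define w(t) := 2Dσ²·(t − τ)^{2D−1} for t > τ. Then w is differentiable on (τ, ∞) and satisfies w′(t) = −α·w(t)^γ for all t > τ, where γ := 2 + 2D/(1 − 2D) and α := (1 − 2D)/((2D)^{1/(1−2D)}·σ^{2/(1−2D)}). -/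
/-- The squared volatility `w(t) = 2Dσ²(t − τ)^{2D−1}` is
differentiable on `(τ, ∞)` and solves the nonlinear mean-reverting ODE
`w′(t) = −α·w(t)^γ`, with `γ = 2 + 2D/(1−2D)` and
`α = (1−2D)/((2D)^{1/(1−2D)}·σ^{2/(1−2D)})`. -/
theorem squared_volatility_solves_ODE
    (D σ τ : ℝ) (hD : D ∈ Set.Ioo (0 : ℝ) (1/2)) (hσ : 0 < σ) :
    ∀ t : ℝ, τ < t →
      HasDerivAt (fun s : ℝ => 2*D*σ^2 * (s - τ) ^ (2*D - 1))
        (-((1 - 2*D) / ((2*D) ^ (1 / (1 - 2*D)) * σ ^ (2 / (1 - 2*D))))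
          * (2*D*σ^2 * (t - τ) ^ (2*D - 1)) ^ (2 + 2*D / (1 - 2*D))) t := by
  intro t ht
  obtain ⟨hD1, hD2⟩ := hD
  have hx : (0:ℝ) < t - τ := by linarith
  have hD0 : (0:ℝ) < 2*D := by linarith
  have h12 : (0:ℝ) < 1 - 2*D := by linarith
  have h1 : HasDerivAt (fun s : ℝ => s - τ) 1 t := (hasDerivAt_id t).sub_const τ
  have h2 : HasDerivAt (fun y : ℝ => y ^ (2*D-1))
      ((2*D-1) * (t - τ) ^ (2*D-1-1)) (t - τ) :=
    Real.hasDerivAt_rpow_const (Or.inl hx.ne')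
  have h3 := (h2.comp t h1).const_mul (2*D*σ^2)
  refine h3.congr_deriv ?_
  set γ : ℝ := 2 + 2*D/(1-2*D) with hγ
  have hσ2 : σ^2 = σ ^ (2:ℝ) := by
    rw [← Real.rpow_natCast σ 2]; norm_num
  have e1 : (2*D*σ^2 * (t-τ) ^ (2*D-1)) ^ γ
      = (2*D)^γ * σ^(2*γ) * (t-τ)^((2*D-1)*γ) := by
    rw [Real.mul_rpow (by positivity) (Real.rpow_nonneg hx.le _),
        Real.mul_rpow (by positivity) (by positivity), hσ2,
        ← Real.rpow_mul hσ.le, ← Real.rpow_mul hx.le]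
  rw [e1]
  have hβγ : (2*D-1)*γ = 2*D-1-1 := by
    rw [hγ]; field_simp; ring
  rw [hβγ]
  have e2 : (2*D)^γ = (2*D) ^ (1/(1-2*D)) * (2*D) := by
    have h : γ = 1/(1-2*D) + 1 := by rw [hγ]; field_simp; ring
    rw [h, Real.rpow_add hD0, Real.rpow_one]
  have e3 : σ^(2*γ) = σ ^ (2/(1-2*D)) * σ^2 := by
    have h : 2*γ = 2/(1-2*D) + 2 := by rw [hγ]; field_simp; ring
    rw [h, Real.rpow_add hσ, hσ2]
  rw [e2, e3]
  have hA : (2*D) ^ (1/(1-2*D)) ≠ 0 := by positivity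
  have hB : σ ^ (2/(1-2*D)) ≠ 0 := by positivity
  field_simp
  ring
end
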